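/- arXiv:2304.10989 — 4 statements merged into one kernel-verified Lean document; each statement's English description precedes it below -/
import Mathlib

section
/- If S′ ≠ S (equivalently, the projective monomial curve associated to A is not arithmetically Cohen–Macaulay), then the sets {s ∈ ℕ : E_{s+2} ≠ ∅} and {s ∈ ℕ : (S′ ∖ S) ∩ L_s ≠ ∅} are both nonempty and bounded above, and their maxima coincide: max{s : E_{s+2} ≠ ∅} = max{s : (S′ ∖ S) ∩ L_s ≠ ∅}. -/
open scoped BigOperators

namespace SumsetsCurve

/-- The `s`-fold sumset of `A = {a 0, …, a (n-1)}`: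
all sums of `s` elements of `A` (with `0A = {0}`). -/
def sumset (n : ℕ) (a : ℕ → ℕ) (s : ℕ) : Set ℕ :=
  {x | ∃ f : Fin s → ℕ, (∀ i, f i < n) ∧ x = ∑ i, a (f i)}

/-- The numerical semigroup (additive submonoid of ℕ) generated by `B`. -/
def numSG (B : Set ℕ) : Set ℕ := (AddSubmonoid.closure B : AddSubmonoid ℕ)

/-- `S₁`, the numerical semigroup generated by `A`. -/
def S1 (n : ℕ) (a : ℕ → ℕ) : Set ℕ := numSG {x | ∃ i < n, a i = x}

/-- `S₂`, the numerical semigroup generated by `d - A`. -/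
def S2 (n d : ℕ) (a : ℕ → ℕ) : Set ℕ := numSG {x | ∃ i < n, d - a i = x}

/-- The conductor of `S ⊆ ℕ`: the least `c` with `c + ℕ ⊆ S`. -/
noncomputable def conductor (S : Set ℕ) : ℕ := sInf {c | ∀ m, c ≤ m → m ∈ S}

/-- The genus of `S ⊆ ℕ`: the number of gaps `|ℕ \ S|`. -/
noncomputable def genus (S : Set ℕ) : ℕ := Set.ncard {x : ℕ | x ∉ S}

/-- `C = S ∩ [0, conductor S - 2]` (the inequality is taken in ℤ). -/
def Cpart (S : Set ℕ) : Set ℕ := {x | x ∈ S ∧ (x : ℤ) ≤ (conductor S : ℤ) - 2}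

/-- The decomposition `sA = C₁ ⊔ [c₁, sd - c₂] ⊔ (sd - C₂)` of the Structure Theorem,
viewed inside ℤ. -/
def structDecomp (n d : ℕ) (a : ℕ → ℕ) (s : ℕ) : Prop :=
  (Nat.cast '' sumset n a s : Set ℤ)
      = (Nat.cast '' Cpart (S1 n a))
        ∪ Set.Icc ((conductor (S1 n a) : ℤ)) ((s * d : ℤ) - (conductor (S2 n d a) : ℤ))
        ∪ ((fun c => (s * d : ℤ) - c) '' (Nat.cast '' Cpart (S2 n d a)))
    ∧ Disjoint (Nat.cast '' Cpart (S1 n a) : Set ℤ)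
        (Set.Icc ((conductor (S1 n a) : ℤ)) ((s * d : ℤ) - (conductor (S2 n d a) : ℤ)))
    ∧ Disjoint (Nat.cast '' Cpart (S1 n a) : Set ℤ)
        ((fun c => (s * d : ℤ) - c) '' (Nat.cast '' Cpart (S2 n d a)))
    ∧ Disjoint
        (Set.Icc ((conductor (S1 n a) : ℤ)) ((s * d : ℤ) - (conductor (S2 n d a) : ℤ)))
        ((fun c => (s * d : ℤ) - c) '' (Nat.cast '' Cpart (S2 n d a)))

/-- `σ(A)`: the least `σ` such that the Structure Theorem decomposition holds
for all `s ≥ σ`. -/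
noncomputable def sigmaA (n d : ℕ) (a : ℕ → ℕ) : ℕ :=
  sInf {σ | ∀ s, σ ≤ s → structDecomp n d a s}

/-- `r(A)`: the least `r` such that `|sA| = sd + 1 - g₁ - g₂` for all `s ≥ r`
(the regularity of the Hilbert function of `k[C_A]`). -/
noncomputable def rA (n d : ℕ) (a : ℕ → ℕ) : ℕ :=
  sInf {r | ∀ s, r ≤ s →
    ((sumset n a s).ncard : ℤ)
      = (s : ℤ) * d + 1 - genus (S1 n a) - genus (S2 n d a)}

/-- The homogeneous semigroup `S ⊆ ℕ²` generated by `{(a, d-a) : a ∈ A}`. -/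
def SS (n d : ℕ) (a : ℕ → ℕ) : Set (ℕ × ℕ) :=
  (AddSubmonoid.closure {p : ℕ × ℕ | ∃ i < n, p = (a i, d - a i)} : AddSubmonoid (ℕ × ℕ))

/-- The Apery set `AP_S = {p ∈ S : p - (0,d) ∉ S, p - (d,0) ∉ S}`. -/
def APS (n d : ℕ) (a : ℕ → ℕ) : Set (ℕ × ℕ) :=
  {p ∈ SS n d a |
    (¬ ∃ q ∈ SS n d a, q + (0, d) = p) ∧ (¬ ∃ q ∈ SS n d a, q + (d, 0) = p)}

/-- The exceptional set
`E_S = {p ∈ S : p - (0,d) ∈ S, p - (d,0) ∈ S, p - (d,d) ∉ S}`. -/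
def ES (n d : ℕ) (a : ℕ → ℕ) : Set (ℕ × ℕ) :=
  {p ∈ SS n d a |
    (∃ q ∈ SS n d a, q + (0, d) = p) ∧ (∃ q ∈ SS n d a, q + (d, 0) = p) ∧
      (¬ ∃ q ∈ SS n d a, q + (d, d) = p)}

/-- The level `L_s = {(x,y) ∈ ℕ² : x + y = sd}`. -/
def Lev (d s : ℕ) : Set (ℕ × ℕ) := {p | p.1 + p.2 = s * d}

/-- `AP_s = AP_S ∩ L_s`. -/
def APs (n d : ℕ) (a : ℕ → ℕ) (s : ℕ) : Set (ℕ × ℕ) := APS n d a ∩ Lev d s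

/-- `E_s = E_S ∩ L_s`. -/
def Es (n d : ℕ) (a : ℕ → ℕ) (s : ℕ) : Set (ℕ × ℕ) := ES n d a ∩ Lev d s

/-- `m(AP_S) = max {s : AP_s ≠ ∅}`. -/
noncomputable def mAP (n d : ℕ) (a : ℕ → ℕ) : ℕ := sSup {s | APs n d a s ≠ ∅}

/-- The Apery set of `S₁` with respect to `d`: `{x ∈ S₁ : x - d ∉ S₁}`. -/
def Ap1 (n d : ℕ) (a : ℕ → ℕ) : Set ℕ := {x ∈ S1 n a | ¬ ∃ y ∈ S1 n a, y + d = x}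

/-- The Apery set of `S₂` with respect to `d`: `{x ∈ S₂ : x - d ∉ S₂}`. -/
def Ap2 (n d : ℕ) (a : ℕ → ℕ) : Set ℕ := {x ∈ S2 n d a | ¬ ∃ y ∈ S2 n d a, y + d = x}

/-- `G`, the subgroup of ℤ² generated by `S`. -/
def G (n d : ℕ) (a : ℕ → ℕ) : AddSubgroup (ℤ × ℤ) :=
  AddSubgroup.closure {p | ∃ i < n, p = ((a i : ℤ), (d : ℤ) - (a i : ℤ))}

/-- `S₁` viewed inside ℤ. -/
def S1Z (n : ℕ) (a : ℕ → ℕ) : Set ℤ := Nat.cast '' S1 n a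

/-- `S₂` viewed inside ℤ. -/
def S2Z (n d : ℕ) (a : ℕ → ℕ) : Set ℤ := Nat.cast '' S2 n d a

/-- `S' = G ∩ (S₁ × S₂)`. -/
def Sprime (n d : ℕ) (a : ℕ → ℕ) : Set (ℤ × ℤ) :=
  {p | p ∈ G n d a ∧ p.1 ∈ S1Z n a ∧ p.2 ∈ S2Z n d a}

/-- The homogeneous semigroup `S` viewed inside ℤ². -/
def SZ (n d : ℕ) (a : ℕ → ℕ) : Set (ℤ × ℤ) :=
  (fun p : ℕ × ℕ => ((p.1 : ℤ), (p.2 : ℤ))) '' SS n d a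


/-- A representation of `x` as a sum of `t` values of `g` (with indices `< n`). -/
def HasRep (n : ℕ) (g : ℕ → ℕ) (x t : ℕ) : Prop :=
  ∃ m : Fin n → ℕ, x = ∑ i, m i * g i ∧ ∑ i, m i = t

lemma HasRep.add {n : ℕ} {g : ℕ → ℕ} {x t x' t' : ℕ}
    (h : HasRep n g x t) (h' : HasRep n g x' t') : HasRep n g (x + x') (t + t') := by
  obtain ⟨m, hm1, hm2⟩ := h
  obtain ⟨m', hm1', hm2'⟩ := h'
  exact ⟨m + m', by simp [hm1, hm1', Finset.sum_add_distrib, add_mul],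
    by simp [← hm2, ← hm2', Finset.sum_add_distrib]⟩

lemma HasRep.single {n : ℕ} {g : ℕ → ℕ} {i : ℕ} (hi : i < n) (k : ℕ) :
    HasRep n g (k * g i) k := by
  classical
  refine ⟨fun j => if j = ⟨i, hi⟩ then k else 0, ?_, ?_⟩ <;>
    simp [Finset.sum_ite_eq']

lemma hasRep_of_mem_numSG {n : ℕ} {g : ℕ → ℕ} {x : ℕ}
    (hx : x ∈ numSG {x | ∃ i < n, g i = x}) :
    ∃ t ≤ x, HasRep n g x t := by
  have hx' : x ∈ AddSubmonoid.closure {x | ∃ i < n, g i = x} := hx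
  clear hx
  induction hx' using AddSubmonoid.closure_induction with
  | mem x hx =>
      obtain ⟨i, hi, rfl⟩ := hx
      by_cases h0 : g i = 0
      · exact ⟨0, by omega, ⟨0, by simp [h0], by simp⟩⟩
      · refine ⟨1, Nat.one_le_iff_ne_zero.2 h0, ?_⟩
        have := HasRep.single (g := g) hi 1
        simpa using this
  | zero => exact ⟨0, le_rfl, ⟨0, by simp, by simp⟩⟩
  | add x y hx hy ihx ihy =>
      obtain ⟨t, ht, hr⟩ := ihx
      obtain ⟨t', ht', hr'⟩ := ihy
      exact ⟨t + t', Nat.add_le_add ht ht', hr.add hr'⟩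


lemma gcd_mem_closure (t : Finset ℕ) (g : ℕ → ℕ) :
    ((t.gcd g : ℕ) : ℤ) ∈ AddSubgroup.closure ((fun i => (g i : ℤ)) '' t) := by
  classical
  induction t using Finset.induction with
  | empty => simp
  | @insert b u hb ih =>
      rw [Finset.gcd_insert]
      have hgg : gcd (g b) (u.gcd g) = Nat.gcd (g b) (u.gcd g) := rfl
      rw [hgg]
      have key : ((Nat.gcd (g b) (u.gcd g) : ℕ) : ℤ)
          = (g b : ℤ) * Nat.gcdA (g b) (u.gcd g) + ((u.gcd g : ℕ) : ℤ) * Nat.gcdB (g b) (u.gcd g) :=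
        Nat.gcd_eq_gcd_ab (g b) (u.gcd g)
      rw [key]
      have h1 : (g b : ℤ) ∈ AddSubgroup.closure ((fun i => (g i : ℤ)) '' (insert b u : Finset ℕ)) :=
        AddSubgroup.subset_closure ⟨b, by simp, rfl⟩
      have h2 : ((u.gcd g : ℕ) : ℤ) ∈ AddSubgroup.closure ((fun i => (g i : ℤ)) '' (insert b u : Finset ℕ)) := by
        refine AddSubgroup.closure_mono ?_ ih
        intro z hz
        obtain ⟨i, hi, rfl⟩ := hz
        exact ⟨i, by simp [hi], rfl⟩
      refine AddSubgroup.add_mem _ ?_ ?_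
      · have := AddSubgroup.zsmul_mem _ h1 (Nat.gcdA (g b) (u.gcd g))
        rwa [zsmul_eq_mul, mul_comm] at this
      · have := AddSubgroup.zsmul_mem _ h2 (Nat.gcdB (g b) (u.gcd g))
        rwa [zsmul_eq_mul, mul_comm] at this

lemma exists_conductor {n : ℕ} {g : ℕ → ℕ}
    (h1 : (1:ℤ) ∈ AddSubgroup.closure ((fun x : ℕ => (x:ℤ)) '' {x | ∃ i < n, g i = x})) :
    ∃ c, ∀ m, c ≤ m → m ∈ numSG {x | ∃ i < n, g i = x} := by
  set B : Set ℕ := {x | ∃ i < n, g i = x} with hB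
  set M : AddSubmonoid ℕ := AddSubmonoid.closure B with hM
  have key : ∀ z ∈ AddSubgroup.closure ((fun x : ℕ => (x:ℤ)) '' B),
      ∃ P Q : ℕ, P ∈ M ∧ Q ∈ M ∧ (P : ℤ) - Q = z := by
    intro z hz
    induction hz using AddSubgroup.closure_induction with
    | mem x hx =>
        obtain ⟨p, hp, rfl⟩ := hx
        exact ⟨p, 0, AddSubmonoid.subset_closure hp, zero_mem _, by simp⟩
    | zero => exact ⟨0, 0, zero_mem _, zero_mem _, by simp⟩
    | add x y hx hy ihx ihy =>
        obtain ⟨P, Q, hP, hQ, hPQ⟩ := ihx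
        obtain ⟨P', Q', hP', hQ', hPQ'⟩ := ihy
        exact ⟨P + P', Q + Q', add_mem hP hP', add_mem hQ hQ', by push_cast; linarith⟩
    | neg x hx ihx =>
        obtain ⟨P, Q, hP, hQ, hPQ⟩ := ihx
        exact ⟨Q, P, hQ, hP, by linarith⟩
  obtain ⟨P, Q, hP, hQ, hPQ⟩ := key 1 h1
  have hPQ' : P = Q + 1 := by exact_mod_cast (by linarith : (P:ℤ) = (Q:ℤ) + 1)
  rcases Nat.eq_zero_or_pos Q with hQ0 | hQ0
  · refine ⟨0, fun m _ => ?_⟩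
    have : m • P ∈ M := AddSubmonoid.nsmul_mem _ hP m
    show m ∈ M
    simpa [hPQ', hQ0, smul_eq_mul] using this
  · refine ⟨Q * Q, fun m hm => ?_⟩
    set t := m / Q with htdef
    set r := m % Q with hrdef
    have hr : r < Q := Nat.mod_lt _ hQ0
    have ht : Q ≤ t := by
      rw [htdef]
      exact Nat.le_div_iff_mul_le hQ0 |>.2 (by nlinarith)
    have hdm : Q * t + r = m := Nat.div_add_mod m Q
    have hmr : m = r * P + (t - r) * Q := by
      have h1 : (t - r) * Q = t * Q - r * Q := Nat.sub_mul t r Q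
      have h2 : r * Q ≤ t * Q := Nat.mul_le_mul_right Q (by omega)
      have h3 : r * P = r * Q + r := by rw [hPQ']; ring
      have h4 : Q * t = t * Q := Nat.mul_comm Q t
      omega
    rw [hmr]
    have m1 : r * P ∈ M := by
      have := AddSubmonoid.nsmul_mem _ hP r; simpa [smul_eq_mul] using this
    have m2 : (t - r) * Q ∈ M := by
      have := AddSubmonoid.nsmul_mem _ hQ (t - r); simpa [smul_eq_mul] using this
    exact add_mem m1 m2



section Main
variable {n d : ℕ} {a : ℕ → ℕ}

lemma gen_mem_SS {i : ℕ} (hi : i < n) : (a i, d - a i) ∈ SS n d a :=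
  AddSubmonoid.subset_closure ⟨i, hi, rfl⟩

lemma ss_proj (haled : ∀ i < n, a i ≤ d) {p : ℕ × ℕ} (hp : p ∈ SS n d a) :
    p.1 ∈ S1 n a ∧ p.2 ∈ S2 n d a ∧ d ∣ p.1 + p.2 := by
  have hp' : p ∈ AddSubmonoid.closure {p : ℕ × ℕ | ∃ i < n, p = (a i, d - a i)} := hp
  clear hp
  induction hp' using AddSubmonoid.closure_induction with
  | mem p hp =>
      obtain ⟨i, hi, rfl⟩ := hp
      refine ⟨AddSubmonoid.subset_closure ⟨i, hi, rfl⟩,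
        AddSubmonoid.subset_closure ⟨i, hi, rfl⟩, ⟨1, ?_⟩⟩
      have := haled i hi
      simp only [mul_one]
      omega
  | zero => exact ⟨zero_mem _, zero_mem _, ⟨0, by simp⟩⟩
  | add p q hp hq ihp ihq =>
      obtain ⟨h1, h2, h3⟩ := ihp
      obtain ⟨h1', h2', h3'⟩ := ihq
      refine ⟨add_mem h1 h1', add_mem h2 h2', ?_⟩
      have h : (p + q).1 + (p + q).2 = (p.1 + p.2) + (q.1 + q.2) := by
        simp [Prod.fst_add, Prod.snd_add]; ring
      rw [h]; exact dvd_add h3 h3'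

lemma ss_castG (haled : ∀ i < n, a i ≤ d) {p : ℕ × ℕ} (hp : p ∈ SS n d a) :
    ((p.1 : ℤ), (p.2 : ℤ)) ∈ G n d a := by
  have hp' : p ∈ AddSubmonoid.closure {p : ℕ × ℕ | ∃ i < n, p = (a i, d - a i)} := hp
  clear hp
  induction hp' using AddSubmonoid.closure_induction with
  | mem p hp =>
      obtain ⟨i, hi, rfl⟩ := hp
      have h : ((((a i, d - a i) : ℕ × ℕ).1 : ℤ), (((a i, d - a i) : ℕ × ℕ).2 : ℤ))
          = ((a i : ℤ), (d:ℤ) - (a i : ℤ)) := by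
        have := haled i hi
        simp [Nat.cast_sub this]
      rw [h]
      exact AddSubgroup.subset_closure ⟨i, hi, rfl⟩
  | zero => simpa using (show ((0:ℤ), (0:ℤ)) ∈ G n d a from AddSubgroup.zero_mem (G n d a))
  | add p q hp hq ihp ihq =>
      have h : ((((p + q).1 : ℕ) : ℤ), (((p + q).2 : ℕ) : ℤ))
          = (((p.1 : ℕ):ℤ), ((p.2 : ℕ):ℤ)) + (((q.1 : ℕ):ℤ), ((q.2 : ℕ):ℤ)) := by
        simp [Prod.fst_add, Prod.snd_add]
      rw [h]; exact add_mem ihp ihq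

lemma G_dvd {p : ℤ × ℤ} (hp : p ∈ G n d a) : (d:ℤ) ∣ p.1 + p.2 := by
  have hp' : p ∈ AddSubgroup.closure {p : ℤ × ℤ | ∃ i < n, p = ((a i : ℤ), (d : ℤ) - (a i : ℤ))} := hp
  clear hp
  induction hp' using AddSubgroup.closure_induction with
  | mem p hp => obtain ⟨i, hi, rfl⟩ := hp; exact ⟨1, by ring⟩
  | zero => simp
  | add p q hp hq ihp ihq =>
      have h : (p + q).1 + (p + q).2 = (p.1 + p.2) + (q.1 + q.2) := by
        simp [Prod.fst_add, Prod.snd_add]; ring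
      rw [h]; exact dvd_add ihp ihq
  | neg p hp ih =>
      have h : (-p).1 + (-p).2 = -(p.1 + p.2) := by simp; ring
      rw [h]; exact ih.neg_right

lemma SZ_subset_Sprime (haled : ∀ i < n, a i ≤ d) : SZ n d a ⊆ Sprime n d a := by
  rintro _ ⟨p, hp, rfl⟩
  obtain ⟨h1, h2, _⟩ := ss_proj haled hp
  exact ⟨ss_castG haled hp, ⟨p.1, h1, rfl⟩, ⟨p.2, h2, rfl⟩⟩

lemma sprime_add (haled : ∀ i < n, a i ≤ d) {q : ℤ × ℤ} (hq : q ∈ Sprime n d a)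
    {p : ℕ × ℕ} (hp : p ∈ SS n d a) :
    q + ((p.1 : ℤ), (p.2 : ℤ)) ∈ Sprime n d a := by
  obtain ⟨hG, ⟨x, hx, hx'⟩, ⟨y, hy, hy'⟩⟩ := hq
  obtain ⟨h1, h2, _⟩ := ss_proj haled hp
  refine ⟨add_mem hG (ss_castG haled hp), ⟨x + p.1, add_mem hx h1, ?_⟩,
    ⟨y + p.2, add_mem hy h2, ?_⟩⟩
  · push_cast
    rw [hx']
    simp [Prod.fst_add]
  · push_cast
    rw [hy']
    simp [Prod.snd_add]


lemma mem_SS_left (ha0 : a 0 = 0) (h0n : 0 < n) (haled : ∀ i < n, a i ≤ d)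
    {x y s t : ℕ} (hrep : HasRep n a x t) (hts : t ≤ s) (hsum : x + y = s * d) :
    (x, y) ∈ SS n d a := by
  obtain ⟨m, hm1, hm2⟩ := hrep
  have key : (∑ i, m i * (d - a i)) + x = t * d := by
    rw [hm1, ← Finset.sum_add_distrib, ← hm2, Finset.sum_mul]
    refine Finset.sum_congr rfl fun i _ => ?_
    have := haled i i.2
    rw [← Nat.mul_add]
    congr 1
    omega
  have heq : (x, y) = (∑ i, m i • ((a i, d - a i) : ℕ × ℕ)) + (s - t) • ((0:ℕ), d) := by
    have h5 : (s - t) * d = s * d - t * d := Nat.sub_mul s t d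
    have h6 : t * d ≤ s * d := Nat.mul_le_mul_right d hts
    rw [Prod.ext_iff]
    constructor
    · simp [Prod.fst_add, Prod.fst_sum, smul_eq_mul, hm1]
    · simp only [Prod.snd_add, Prod.snd_sum, Prod.smul_snd, smul_eq_mul]
      omega
  rw [heq]
  have hSM : ∀ (u v : ℕ × ℕ), u ∈ SS n d a → v ∈ SS n d a → u + v ∈ SS n d a :=
    fun u v hu hv => add_mem hu hv
  refine hSM _ _ ?_ ?_
  · refine AddSubmonoid.sum_mem _ (fun i _ => AddSubmonoid.nsmul_mem _ (AddSubmonoid.subset_closure ?_) _)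
    exact ⟨(i:ℕ), i.2, rfl⟩
  · have hgen : ((0:ℕ), d) ∈ {p : ℕ × ℕ | ∃ i < n, p = (a i, d - a i)} :=
      ⟨0, h0n, by rw [ha0]; simp⟩
    exact AddSubmonoid.nsmul_mem _ (AddSubmonoid.subset_closure hgen) _

lemma mem_SS_right (had : a (n-1) = d) (h0n : 0 < n) (haled : ∀ i < n, a i ≤ d)
    {x y s t : ℕ} (hrep : HasRep n (fun i => d - a i) y t) (hts : t ≤ s)
    (hsum : x + y = s * d) :
    (x, y) ∈ SS n d a := by
  obtain ⟨m, hm0, hm2⟩ := hrep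
  have hm1 : y = ∑ i : Fin n, m i * (d - a (i:ℕ)) := by simpa using hm0
  clear hm0
  have key : (∑ i, m i * a i) + y = t * d := by
    rw [hm1, ← Finset.sum_add_distrib, ← hm2, Finset.sum_mul]
    refine Finset.sum_congr rfl fun i _ => ?_
    have := haled i i.2
    rw [← Nat.mul_add]
    congr 1
    omega
  have heq : (x, y) = (∑ i, m i • ((a i, d - a i) : ℕ × ℕ)) + (s - t) • ((d:ℕ), 0) := by
    have h5 : (s - t) * d = s * d - t * d := Nat.sub_mul s t d
    have h6 : t * d ≤ s * d := Nat.mul_le_mul_right d hts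
    rw [Prod.ext_iff]
    constructor
    · simp only [Prod.fst_add, Prod.fst_sum, Prod.smul_fst, smul_eq_mul]
      omega
    · simp [Prod.snd_add, Prod.snd_sum, smul_eq_mul, hm1]
  rw [heq]
  have hSM : ∀ (u v : ℕ × ℕ), u ∈ SS n d a → v ∈ SS n d a → u + v ∈ SS n d a :=
    fun u v hu hv => add_mem hu hv
  refine hSM _ _ ?_ ?_
  · refine AddSubmonoid.sum_mem _ (fun i _ => AddSubmonoid.nsmul_mem _ (AddSubmonoid.subset_closure ?_) _)
    exact ⟨(i:ℕ), i.2, rfl⟩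
  · have hgen : ((d:ℕ), 0) ∈ {p : ℕ × ℕ | ∃ i < n, p = (a i, d - a i)} :=
      ⟨n-1, by omega, by rw [had]; simp⟩
    exact AddSubmonoid.nsmul_mem _ (AddSubmonoid.subset_closure hgen) _


lemma sprime_to_SZ (ha0 : a 0 = 0) (had : a (n-1) = d) (h0n : 0 < n) (hd : 0 < d)
    (haled : ∀ i < n, a i ≤ d)
    {c₁ : ℕ} (hc₁ : ∀ m, c₁ ≤ m → m ∈ S1 n a)
    {q : ℤ × ℤ} (hq : q ∈ Sprime n d a)
    {s : ℕ} (hsum : q.1 + q.2 = (s:ℤ) * d) (hs : d * (c₁ + d) + c₁ + 1 ≤ s) :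
    q ∈ SZ n d a := by
  obtain ⟨hG, ⟨x, hx, hx'⟩, ⟨y, hy, hy'⟩⟩ := hq
  have hqd : q = ((x:ℤ), (y:ℤ)) := by
    rw [Prod.ext_iff]; exact ⟨hx'.symm, hy'.symm⟩
  subst hqd
  have hsum' : (x:ℤ) + (y:ℤ) = (s:ℤ) * d := hsum
  have hxy : x + y = s * d := by exact_mod_cast hsum'
  rcases le_or_gt x s with hxs | hxs
  · obtain ⟨t, htx, hrep⟩ := hasRep_of_mem_numSG hx
    exact ⟨(x, y), mem_SS_left ha0 h0n haled hrep (le_trans htx hxs) hxy, rfl⟩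
  rcases le_or_gt y s with hys | hys
  · obtain ⟨t, hty, hrep⟩ := hasRep_of_mem_numSG hy
    exact ⟨(x, y), mem_SS_right had h0n haled hrep (le_trans hty hys) hxy, rfl⟩
  have hxc : c₁ ≤ x := by omega
  obtain ⟨j, rem, hrem, hx_eq⟩ : ∃ j rem, rem < d ∧ x = j * d + rem + c₁ := by
    refine ⟨(x - c₁) / d, (x - c₁) % d, Nat.mod_lt _ hd, ?_⟩
    have h := Nat.div_add_mod (x - c₁) d
    have hcm : d * ((x - c₁) / d) = ((x - c₁) / d) * d := Nat.mul_comm _ _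
    omega
  have hrS : c₁ + rem ∈ S1 n a := hc₁ _ (by omega)
  obtain ⟨t, htr, hrep⟩ := hasRep_of_mem_numSG hrS
  have hjrep : HasRep n a (j * a (n-1)) j := HasRep.single (by omega) j
  rw [had] at hjrep
  have hxrep : HasRep n a x (t + j) := by
    have h := hrep.add hjrep
    rwa [show c₁ + rem + j * d = x by omega] at h
  have hbound : t + j ≤ s := by
    have h1 : (c₁ + d + j) * d ≤ s * d := by
      have h2 : (c₁ + d + j) * d = (c₁ + d) * d + j * d := by ring
      have h3 : (c₁ + d) * d = d * (c₁ + d) := Nat.mul_comm _ _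
      omega
    have h4 : c₁ + d + j ≤ s := Nat.le_of_mul_le_mul_right h1 hd
    omega
  exact ⟨(x, y), mem_SS_left ha0 h0n haled hxrep hbound hxy, rfl⟩

end Main



/-- If `S' ≠ S` (i.e., `C_A` is not arithmetically Cohen–Macaulay), then the sets
`{s : E_{s+2} ≠ ∅}` and `{s : (S' \ S) ∩ L_s ≠ ∅}` are nonempty and bounded above,
and their maxima coincide. -/
theorem max_Es_eq_max_SprimeDiff (n d : ℕ) (a : ℕ → ℕ)
    (hn : 4 ≤ n)
    (ha0 : a 0 = 0)
    (had : a (n - 1) = d)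
    (hmono : ∀ i j, i < j → j ≤ n - 1 → a i < a j)
    (hgcd : (Finset.Icc 1 (n - 1)).gcd a = 1)
    (hNCM : Sprime n d a ≠ SZ n d a) :
    {s : ℕ | Es n d a (s + 2) ≠ ∅}.Nonempty
      ∧ {s : ℕ | ∃ p ∈ Sprime n d a \ SZ n d a, p.1 + p.2 = (s : ℤ) * d}.Nonempty
      ∧ BddAbove {s : ℕ | Es n d a (s + 2) ≠ ∅}
      ∧ BddAbove {s : ℕ | ∃ p ∈ Sprime n d a \ SZ n d a, p.1 + p.2 = (s : ℤ) * d}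
      ∧ sSup {s : ℕ | Es n d a (s + 2) ≠ ∅}
          = sSup {s : ℕ | ∃ p ∈ Sprime n d a \ SZ n d a, p.1 + p.2 = (s : ℤ) * d} := by
  
  classical
  have h0n : 0 < n := by omega
  have hn1 : n - 1 < n := by omega
  have hd : 0 < d := by
    have h := hmono 0 (n-1) (by omega) le_rfl
    rw [ha0, had] at h
    exact h
  have haled : ∀ i < n, a i ≤ d := by
    intro i hi
    rcases eq_or_lt_of_le (show i ≤ n - 1 by omega) with h | h
    · rw [h, had]
    · have := hmono i (n-1) h le_rfl
      rw [had] at this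
      exact this.le
  -- conductor for S1
  have h1Z : (1:ℤ) ∈ AddSubgroup.closure ((fun x : ℕ => (x:ℤ)) '' {x | ∃ i < n, a i = x}) := by
    have h := gcd_mem_closure (Finset.Icc 1 (n-1)) a
    rw [hgcd] at h
    have h' : ((1:ℕ):ℤ) = (1:ℤ) := by norm_num
    rw [h'] at h
    refine AddSubgroup.closure_mono ?_ h
    rintro z ⟨i, hi, rfl⟩
    rw [Finset.mem_coe, Finset.mem_Icc] at hi
    exact ⟨a i, ⟨i, by omega, rfl⟩, rfl⟩
  obtain ⟨c₁, hc₁⟩ := exists_conductor h1Z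
  have hc₁' : ∀ m, c₁ ≤ m → m ∈ S1 n a := hc₁
  set N := d * (c₁ + d) + c₁ + 1 with hN
  -- key finiteness
  have key : ∀ q ∈ Sprime n d a, ∀ s : ℕ, q.1 + q.2 = (s:ℤ) * d → N ≤ s → q ∈ SZ n d a :=
    fun q hq s h1 h2 => sprime_to_SZ ha0 had h0n hd haled hc₁' hq h1 (by omega)
  set Fset := {s : ℕ | ∃ p ∈ Sprime n d a \ SZ n d a, p.1 + p.2 = (s:ℤ) * d} with hFset
  set Eset := {s : ℕ | Es n d a (s + 2) ≠ ∅} with hEset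
  have hFbdd : BddAbove Fset := by
    refine ⟨N, fun s hs => ?_⟩
    obtain ⟨p, ⟨hp1, hp2⟩, hps⟩ := hs
    by_contra h
    exact hp2 (key p hp1 s hps (by omega))
  -- generators
  have hgen0d : ((0:ℕ), d) ∈ SS n d a := by
    have h := gen_mem_SS (a := a) (d := d) h0n
    rwa [ha0, Nat.sub_zero] at h
  have hgend0 : ((d:ℕ), (0:ℕ)) ∈ SS n d a := by
    have h := gen_mem_SS (a := a) (d := d) hn1
    rwa [had, Nat.sub_self] at h
  have hgendd : ((d:ℕ), (d:ℕ)) ∈ SS n d a := by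
    have h := add_mem hgend0 hgen0d
    have he : ((d:ℕ), (0:ℕ)) + ((0:ℕ), d) = ((d:ℕ), (d:ℕ)) := by simp
    rwa [he] at h
  -- Fset nonempty
  have hsub : SZ n d a ⊆ Sprime n d a := SZ_subset_Sprime haled
  have hFne : Fset.Nonempty := by
    have hqex : ∃ q, q ∈ Sprime n d a \ SZ n d a := by
      by_contra h
      push_neg at h
      refine hNCM (Set.Subset.antisymm (fun q hq => ?_) hsub)
      by_contra hq2
      exact (h q) ⟨hq, hq2⟩
    obtain ⟨q, hq⟩ := hqex
    obtain ⟨hG, ⟨x, hx, hx'⟩, ⟨y, hy, hy'⟩⟩ := hq.1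
    have hdvd : (d:ℤ) ∣ q.1 + q.2 := G_dvd hG
    obtain ⟨z, hz⟩ := hdvd
    have hz0 : 0 ≤ z := by
      have hq12 : 0 ≤ q.1 + q.2 := by rw [← hx', ← hy']; positivity
      nlinarith [hq12, hz, (by exact_mod_cast hd : (0:ℤ) < (d:ℤ))]
    refine ⟨z.toNat, q, hq, ?_⟩
    rw [hz, Int.toNat_of_nonneg hz0]
    ring
  -- sup of Fset
  set s₀ := sSup Fset with hs₀def
  have hs₀ : s₀ ∈ Fset := Nat.sSup_mem hFne hFbdd
  obtain ⟨p, ⟨hpS, hpN⟩, hps⟩ := hs₀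
  obtain ⟨hG, ⟨x, hx, hx'⟩, ⟨y, hy, hy'⟩⟩ := hpS
  have hpd : p = ((x:ℤ), (y:ℤ)) := by rw [Prod.ext_iff]; exact ⟨hx'.symm, hy'.symm⟩
  subst hpd
  have hpS : ((x:ℤ), (y:ℤ)) ∈ Sprime n d a := ⟨hG, ⟨x, hx, rfl⟩, ⟨y, hy, rfl⟩⟩
  have hxy : x + y = s₀ * d := by
    have hsum' : (x:ℤ) + (y:ℤ) = (s₀:ℤ) * d := hps
    exact_mod_cast hsum'
  have hnotF : ∀ s : ℕ, s₀ < s → ∀ q ∈ Sprime n d a, q.1 + q.2 = (s:ℤ) * d → q ∈ SZ n d a := by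
    intro s hls q hq hqs
    by_contra hq2
    have : s ∈ Fset := ⟨q, ⟨hq, hq2⟩, hqs⟩
    have := le_csSup hFbdd this
    omega
  -- the three shifted points are in SS
  have hshift : ∀ u v : ℕ, ((u, v) : ℕ × ℕ) ∈ SS n d a →
      (((x + u : ℕ):ℤ), ((y + v : ℕ):ℤ)) ∈ Sprime n d a := by
    intro u v huv
    have h := sprime_add haled hpS huv
    have he : ((x:ℤ), (y:ℤ)) + ((((u,v) : ℕ × ℕ).1 : ℤ), (((u,v) : ℕ × ℕ).2 : ℤ))
        = (((x + u : ℕ):ℤ), ((y + v : ℕ):ℤ)) := by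
      rw [Prod.ext_iff]
      constructor <;> push_cast <;> simp [Prod.fst_add, Prod.snd_add]
    rwa [he] at h
  -- get SS membership of shifted points
  have hmemSS : ∀ u v : ℕ, ((u, v) : ℕ × ℕ) ∈ SS n d a → (0 < u + v) →
      ((x + u, y + v) : ℕ × ℕ) ∈ SS n d a := by
    intro u v huv hpos
    obtain ⟨_, _, hdd⟩ := ss_proj haled huv
    obtain ⟨k, hk⟩ := hdd
    have hk1 : 1 ≤ k := by
      rcases Nat.eq_zero_or_pos k with h0 | h1
      · simp [h0] at hk; omega
      · exact h1
    have hq := hshift u v huv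
    have hlev : ((x + u : ℕ):ℤ) + ((y + v : ℕ):ℤ) = ((s₀ + k : ℕ):ℤ) * d := by
      push_cast
      have : (u:ℤ) + (v:ℤ) = (d:ℤ) * k := by exact_mod_cast hk
      have hxyZ : (x:ℤ) + (y:ℤ) = (s₀:ℤ) * d := hps
      linarith
    have := hnotF (s₀ + k) (by omega) _ hq hlev
    obtain ⟨w, hw, hwc⟩ := this
    have hw1 : w.1 = x + u := by
      have h1 : ((w.1:ℤ)) = ((x + u : ℕ):ℤ) := congrArg Prod.fst hwc
      exact_mod_cast h1
    have hw2 : w.2 = y + v := by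
      have h2 : ((w.2:ℤ)) = ((y + v : ℕ):ℤ) := congrArg Prod.snd hwc
      exact_mod_cast h2
    have hwe : w = ((x + u, y + v) : ℕ × ℕ) := Prod.ext_iff.mpr ⟨hw1, hw2⟩
    rwa [hwe] at hw
  have A1 : ((x, y + d) : ℕ × ℕ) ∈ SS n d a := by
    have h := hmemSS 0 d hgen0d (by omega)
    rwa [Nat.add_zero] at h
  have A2 : ((x + d, y) : ℕ × ℕ) ∈ SS n d a := by
    have h := hmemSS d 0 hgend0 (by omega)
    rwa [Nat.add_zero] at h
  have A3 : ((x + d, y + d) : ℕ × ℕ) ∈ SS n d a := hmemSS d d hgendd (by omega)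
  have hxyN : ((x, y) : ℕ × ℕ) ∉ SS n d a := fun h => hpN ⟨(x, y), h, rfl⟩
  -- the exceptional point
  have hpE : ((x + d, y + d) : ℕ × ℕ) ∈ Es n d a (s₀ + 2) := by
    refine ⟨⟨A3, ⟨(x + d, y), A2, by simp⟩, ⟨(x, y + d), A1, by simp⟩, ?_⟩, ?_⟩
    · rintro ⟨r, hr, hre⟩
      have h1 : r.1 + d = x + d := congrArg Prod.fst hre
      have h2 : r.2 + d = y + d := congrArg Prod.snd hre
      have : r = ((x, y) : ℕ × ℕ) := Prod.ext_iff.mpr ⟨by omega, by omega⟩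
      exact hxyN (this ▸ hr)
    · show (x + d) + (y + d) = (s₀ + 2) * d
      have : (s₀ + 2) * d = s₀ * d + 2 * d := by ring
      omega
  have hs₀E : s₀ ∈ Eset := Set.nonempty_iff_ne_empty.1 ⟨_, hpE⟩
  -- Eset ⊆ Fset
  have hEF : Eset ⊆ Fset := by
    intro s hs
    obtain ⟨p, hp⟩ := Set.nonempty_iff_ne_empty.2 hs
    obtain ⟨⟨hpSS, ⟨r, hr, hre⟩, ⟨r', hr', hre'⟩, hnot⟩, hpL⟩ := hp
    have hre1 : r.1 + 0 = p.1 := by have := congrArg Prod.fst hre; simpa using this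
    have hre2 : r.2 + d = p.2 := by have := congrArg Prod.snd hre; simpa using this
    have hre'1 : r'.1 + d = p.1 := by have := congrArg Prod.fst hre'; simpa using this
    have hre'2 : r'.2 + 0 = p.2 := by have := congrArg Prod.snd hre'; simpa using this
    have w1S : r'.1 ∈ S1 n a := (ss_proj haled hr').1
    have w2S : r.2 ∈ S2 n d a := (ss_proj haled hr).2.1
    have hgen0G : ((0:ℤ), (d:ℤ)) ∈ G n d a := by
      refine AddSubgroup.subset_closure ⟨0, h0n, ?_⟩
      rw [ha0]
      simp
    have hG1 := ss_castG haled hr'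
    have wG : (((r'.1 : ℕ):ℤ), ((r.2 : ℕ):ℤ)) ∈ G n d a := by
      have he : (((r'.1 : ℕ):ℤ), ((r.2 : ℕ):ℤ))
          = (((r'.1 : ℕ):ℤ), ((r'.2 : ℕ):ℤ)) - ((0:ℤ), (d:ℤ)) := by
        rw [Prod.ext_iff]
        constructor
        · simp
        · show ((r.2 : ℕ):ℤ) = ((r'.2 : ℕ):ℤ) - (d:ℤ)
          have : r.2 + d = r'.2 + 0 := by omega
          omega
      rw [he]
      exact sub_mem hG1 hgen0G
    have wS : (((r'.1 : ℕ):ℤ), ((r.2 : ℕ):ℤ)) ∈ Sprime n d a :=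
      ⟨wG, ⟨r'.1, w1S, rfl⟩, ⟨r.2, w2S, rfl⟩⟩
    have wN : (((r'.1 : ℕ):ℤ), ((r.2 : ℕ):ℤ)) ∉ SZ n d a := by
      rintro ⟨u, hu, huc⟩
      have h1 : u.1 = r'.1 := by
        have h : ((u.1:ℤ)) = ((r'.1:ℤ)) := congrArg Prod.fst huc
        exact_mod_cast h
      have h2 : u.2 = r.2 := by
        have h : ((u.2:ℤ)) = ((r.2:ℤ)) := congrArg Prod.snd huc
        exact_mod_cast h
      refine hnot ⟨(r'.1, r.2), ?_, ?_⟩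
      · have : u = ((r'.1, r.2) : ℕ × ℕ) := Prod.ext_iff.mpr ⟨h1, h2⟩
        rwa [this] at hu
      · have hL : p.1 + p.2 = (s + 2) * d := hpL
        rw [Prod.ext_iff]
        constructor
        · show r'.1 + d = p.1
          omega
        · show r.2 + d = p.2
          omega
    have hlevZ : ((r'.1 : ℕ):ℤ) + ((r.2 : ℕ):ℤ) = (s:ℤ) * d := by
      have hL : p.1 + p.2 = (s + 2) * d := hpL
      have hexp : (s + 2) * d = s * d + 2 * d := by ring
      have : r'.1 + r.2 = s * d := by omega
      exact_mod_cast this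
    exact ⟨_, ⟨wS, wN⟩, hlevZ⟩
  have hEbdd : BddAbove Eset := hFbdd.mono hEF
  refine ⟨⟨s₀, hs₀E⟩, hFne, hEbdd, hFbdd, ?_⟩
  exact le_antisymm (csSup_le_csSup hFbdd ⟨s₀, hs₀E⟩ hEF) (le_csSup hEbdd hs₀E)


end SumsetsCurve
end

section
/- If (x,y) ∈ G with x ∈ ℤ ∖ S₁, y ∈ ℤ ∖ S₂ and x + y = sd for some integer s, then there exists an integer s′ ≥ s + 2 such that AP_{s′} ≠ ∅; in particular m(AP_S) ≥ s + 2. -/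
open scoped BigOperators

namespace SumsetsCurve

variable {n d : ℕ} {a : ℕ → ℕ}

lemma zero_mem_sumset : (0:ℕ) ∈ sumset n a 0 :=
  ⟨fun i => i.elim0, fun i => i.elim0, by simp⟩

lemma mem_sumset_single {i : ℕ} (hi : i < n) : a i ∈ sumset n a 1 :=
  ⟨fun _ => i, fun _ => hi, by simp⟩

lemma sumset_add {u v s t : ℕ} (hu : u ∈ sumset n a s) (hv : v ∈ sumset n a t) :
    u + v ∈ sumset n a (s + t) := by
  obtain ⟨f, hf, rfl⟩ := hu
  obtain ⟨g, hg, rfl⟩ := hv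
  refine ⟨Fin.append f g, ?_, ?_⟩
  · intro i
    refine Fin.addCases (fun j => ?_) (fun j => ?_) i
    · simpa [Fin.append_left] using hf j
    · simpa [Fin.append_right] using hg j
  · rw [Fin.sum_univ_add]
    simp [Fin.append_left, Fin.append_right]

lemma mul_mem_sumset {i : ℕ} (hi : i < n) (c : ℕ) : c * a i ∈ sumset n a c := by
  induction c with
  | zero => simpa using (zero_mem_sumset (n := n) (a := a))
  | succ k ih =>
      have := sumset_add ih (mem_sumset_single hi)
      simpa [Nat.succ_mul] using this

lemma sum_counts_mem_sumset (c : ℕ → ℕ) :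
    ∀ F : Finset ℕ, (∀ j ∈ F, j < n) →
      (∑ j ∈ F, c j * a j) ∈ sumset n a (∑ j ∈ F, c j) := by
  intro F
  classical
  induction F using Finset.induction_on with
  | empty => intro _; simpa using (zero_mem_sumset (n := n) (a := a))
  | insert _ _ hx ih =>
      intro hF
      rw [Finset.sum_insert hx, Finset.sum_insert hx]
      exact sumset_add (mul_mem_sumset (hF _ (Finset.mem_insert_self _ _)) _)
        (ih fun j hj => hF j (Finset.mem_insert_of_mem hj))

lemma sumset_counts {t u : ℕ} (hu : u ∈ sumset n a t) :
    ∃ c : ℕ → ℕ, (∑ j ∈ Finset.range n, c j) = t ∧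
      (∑ j ∈ Finset.range n, c j * a j) = u := by
  obtain ⟨f, hf, rfl⟩ := hu
  refine ⟨fun j => (Finset.univ.filter fun i => f i = j).card, ?_, ?_⟩
  · rw [Finset.sum_card_fiberwise_eq_card_filter]
    rw [Finset.filter_true_of_mem (fun i _ => Finset.mem_range.2 (hf i))]
    simp
  · have key := Finset.sum_fiberwise_of_maps_to (s := Finset.univ) (t := Finset.range n)
      (g := f) (fun i _ => Finset.mem_range.2 (hf i)) (fun i => a (f i))
    rw [← key]
    refine Finset.sum_congr rfl fun j _ => ?_
    calc (Finset.univ.filter fun i => f i = j).card * a j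
        = ∑ _i ∈ Finset.univ.filter fun i => f i = j, a j := by
          rw [Finset.sum_const, smul_eq_mul]
      _ = ∑ i ∈ Finset.univ.filter fun i => f i = j, a (f i) :=
          Finset.sum_congr rfl fun i hi => by rw [(Finset.mem_filter.1 hi).2]

lemma mem_sumset_le (hle : ∀ i, i < n → a i ≤ d) {t u : ℕ} (hu : u ∈ sumset n a t) :
    u ≤ t * d := by
  obtain ⟨f, hf, rfl⟩ := hu
  calc ∑ i, a (f i) ≤ ∑ _i : Fin t, d := Finset.sum_le_sum fun i _ => hle _ (hf i)
    _ = t * d := by simp [Finset.sum_const, mul_comm]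

lemma sumset_mem_S1 {t u : ℕ} (hu : u ∈ sumset n a t) : u ∈ S1 n a := by
  obtain ⟨f, hf, rfl⟩ := hu
  exact AddSubmonoid.sum_mem _ fun i _ => AddSubmonoid.subset_closure ⟨f i, hf i, rfl⟩

lemma sum_sub_eq (hle : ∀ i, i < n → a i ≤ d) {t : ℕ} (f : Fin t → ℕ) (hf : ∀ i, f i < n) :
    (∑ i, (d - a (f i))) = t * d - ∑ i, a (f i) := by
  have hsub : (∑ i, (d - a (f i))) + (∑ i, a (f i)) = t * d := by
    rw [← Finset.sum_add_distrib]
    rw [Finset.sum_congr rfl (fun i _ => Nat.sub_add_cancel (hle _ (hf i)))]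
    simp [Finset.sum_const, mul_comm]
  omega

lemma sumset_mem_S2 (hle : ∀ i, i < n → a i ≤ d) {t u : ℕ} (hu : u ∈ sumset n a t) :
    t * d - u ∈ S2 n d a := by
  obtain ⟨f, hf, rfl⟩ := hu
  rw [← sum_sub_eq hle f hf]
  exact AddSubmonoid.sum_mem _ fun i _ => AddSubmonoid.subset_closure ⟨f i, hf i, rfl⟩

lemma sumset_mem_SS (hle : ∀ i, i < n → a i ≤ d) {t u : ℕ} (hu : u ∈ sumset n a t) :
    (u, t * d - u) ∈ SS n d a := by
  obtain ⟨f, hf, rfl⟩ := hu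
  have key : (∑ i : Fin t, ((a (f i), d - a (f i)) : ℕ × ℕ))
      ∈ AddSubmonoid.closure {p : ℕ × ℕ | ∃ i < n, p = (a i, d - a i)} :=
    AddSubmonoid.sum_mem _ fun i _ => AddSubmonoid.subset_closure ⟨f i, hf i, rfl⟩
  have heq : (∑ i : Fin t, ((a (f i), d - a (f i)) : ℕ × ℕ))
      = (∑ i, a (f i), t * d - ∑ i, a (f i)) := by
    refine Prod.ext ?_ ?_
    · rw [Prod.fst_sum]
    · rw [Prod.snd_sum]
      exact sum_sub_eq hle f hf
  rw [← heq]
  exact key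

lemma SS_level (hle : ∀ i, i < n → a i ≤ d) {p : ℕ × ℕ} (hp : p ∈ SS n d a) :
    ∃ t, p.1 ∈ sumset n a t ∧ p.1 + p.2 = t * d := by
  have hp' : p ∈ AddSubmonoid.closure {p : ℕ × ℕ | ∃ i < n, p = (a i, d - a i)} := hp
  clear hp
  induction hp' using AddSubmonoid.closure_induction with
  | mem q hq =>
      obtain ⟨i, hi, rfl⟩ := hq
      refine ⟨1, mem_sumset_single hi, ?_⟩
      have := hle i hi
      simp only [one_mul]
      omega
  | zero => exact ⟨0, zero_mem_sumset, by simp⟩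
  | add q r hq hr ihq ihr =>
      obtain ⟨t1, h1, e1⟩ := ihq
      obtain ⟨t2, h2, e2⟩ := ihr
      refine ⟨t1 + t2, sumset_add h1 h2, ?_⟩
      have e3 : (q + r).1 + (q + r).2 = (q.1 + q.2) + (r.1 + r.2) := by
        simp only [Prod.fst_add, Prod.snd_add]
        omega
      rw [e3, e1, e2, add_mul]

lemma S1_exists_sumset {u : ℕ} (hu : u ∈ S1 n a) : ∃ t, u ∈ sumset n a t := by
  have hu' : u ∈ AddSubmonoid.closure {x | ∃ i < n, a i = x} := hu
  clear hu
  induction hu' using AddSubmonoid.closure_induction with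
  | mem q hq =>
      obtain ⟨i, hi, rfl⟩ := hq
      exact ⟨1, mem_sumset_single hi⟩
  | zero => exact ⟨0, zero_mem_sumset⟩
  | add q r hq hr ihq ihr =>
      obtain ⟨t1, h1⟩ := ihq
      obtain ⟨t2, h2⟩ := ihr
      exact ⟨t1 + t2, sumset_add h1 h2⟩

lemma sumset_update_sub {c : ℕ → ℕ} {t u : ℕ} {j : ℕ} (hj : j ∈ Finset.range n)
    (k : ℕ) (hk : k ≤ c j)
    (hct : ∑ i ∈ Finset.range n, c i = t)
    (hcu : ∑ i ∈ Finset.range n, c i * a i = u) :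
    u - k * a j ∈ sumset n a (t - k) := by
  classical
  have hmem := sum_counts_mem_sumset (a := a) (Function.update c j (c j - k))
    (Finset.range n) (fun i hi => Finset.mem_range.1 hi)
  have hsum : ∑ i ∈ Finset.range n, Function.update c j (c j - k) i = t - k := by
    rw [Finset.sum_update_of_mem hj, Finset.sdiff_singleton_eq_erase]
    have h2 : c j + ∑ i ∈ (Finset.range n).erase j, c i = t := by
      rw [Finset.add_sum_erase _ _ hj]; exact hct
    omega
  have hval : ∑ i ∈ Finset.range n, Function.update c j (c j - k) i * a i
      = u - k * a j := by
    have e : ∀ i ∈ Finset.range n, Function.update c j (c j - k) i * a i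
        = Function.update (fun i => c i * a i) j ((c j - k) * a j) i := by
      intro i _
      by_cases h : i = j
      · subst h; simp
      · simp [Function.update_of_ne h]
    rw [Finset.sum_congr rfl e, Finset.sum_update_of_mem hj,
      Finset.sdiff_singleton_eq_erase]
    have hsplitu : c j * a j + ∑ i ∈ (Finset.range n).erase j, c i * a i = u := by
      rw [← hcu]
      exact Finset.add_sum_erase (Finset.range n) (fun i => c i * a i) hj
    have hx2 : k * a j + ((c j - k) * a j + ∑ i ∈ (Finset.range n).erase j, c i * a i)
        = u := by
      rw [← add_assoc, ← add_mul, Nat.add_sub_cancel' hk]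
      exact hsplitu
    rw [← hx2, Nat.add_sub_cancel_left]
  rw [hsum, hval] at hmem
  exact hmem

lemma descent (hn : 4 ≤ n) (ha0 : a 0 = 0) (had : a (n - 1) = d)
    (hmono : ∀ i j, i < j → j ≤ n - 1 → a i < a j)
    {t u : ℕ} (ht : n * d ≤ t) (hu : u ∈ sumset n a t) :
    u ∈ sumset n a (t - 1) ∨ (d ≤ u ∧ u - d ∈ sumset n a (t - 1)) := by
  classical
  have hd : 0 < d := by
    have h := hmono 0 (n - 1) (by omega) le_rfl
    rw [ha0, had] at h; exact h
  obtain ⟨c, hct, hcu⟩ := sumset_counts hu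
  have h0n : (0:ℕ) ∈ Finset.range n := Finset.mem_range.2 (by omega)
  have hn1 : n - 1 ∈ Finset.range n := Finset.mem_range.2 (by omega)
  by_cases h0 : 1 ≤ c 0
  · left
    have := sumset_update_sub h0n 1 h0 hct hcu
    simpa [ha0] using this
  · by_cases h1 : 1 ≤ c (n - 1)
    · right
      have hterm : c (n - 1) * a (n - 1) ≤ u := by
        rw [← hcu]
        exact Finset.single_le_sum (f := fun i => c i * a i) (fun i _ => Nat.zero_le _) hn1
      have hdu : d ≤ u := by
        rw [had] at hterm
        calc d = 1 * d := (one_mul d).symm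
          _ ≤ c (n - 1) * d := Nat.mul_le_mul_right d h1
          _ ≤ u := hterm
      have h2 := sumset_update_sub hn1 1 h1 hct hcu
      rw [one_mul, had] at h2
      exact ⟨hdu, h2⟩
    · push_neg at h0 h1
      have hc0 : c 0 = 0 := by omega
      have hc1 : c (n - 1) = 0 := by omega
      have hex : ∃ j ∈ Finset.range n, d ≤ c j := by
        by_contra hco
        push_neg at hco
        have hsum : t ≤ n * (d - 1) := by
          calc t = ∑ j ∈ Finset.range n, c j := hct.symm
            _ ≤ ∑ _j ∈ Finset.range n, (d - 1) :=
                Finset.sum_le_sum fun j hj => by have := hco j hj; omega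
            _ = n * (d - 1) := by simp [Finset.sum_const, mul_comm]
        have hlt : n * (d - 1) < n * d :=
          mul_lt_mul_of_pos_left (by omega) (by omega)
        exact absurd (lt_of_le_of_lt (ht.trans hsum) hlt) (lt_irrefl _)
      obtain ⟨j, hjmem, hjd⟩ := hex
      have hjlt : j < n := Finset.mem_range.1 hjmem
      have hj0 : j ≠ 0 := by intro h; rw [h, hc0] at hjd; omega
      have hjn1 : j ≠ n - 1 := by intro h; rw [h, hc1] at hjd; omega
      have haj_pos : 0 < a j := by
        have h := hmono 0 j (by omega) (by omega)
        rw [ha0] at h; exact h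
      have haj_lt : a j < d := by
        have h := hmono j (n - 1) (by omega) le_rfl
        rw [had] at h; exact h
      left
      have hv : u - d * a j ∈ sumset n a (t - d) :=
        sumset_update_sub hjmem d hjd hct hcu
      have hw : d * a j ∈ sumset n a (d - 1) := by
        have h1' : a j * a (n - 1) ∈ sumset n a (a j) :=
          mul_mem_sumset (i := n - 1) (by omega) (a j)
        have h2' : (d - a j - 1) * a 0 ∈ sumset n a (d - a j - 1) :=
          mul_mem_sumset (i := 0) (by omega) _
        have h3 := sumset_add h1' h2'
        rw [had, ha0] at h3
        have e1 : a j + (d - a j - 1) = d - 1 := by omega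
        have e2 : a j * d + (d - a j - 1) * 0 = d * a j := by
          rw [mul_zero, add_zero, mul_comm]
        rwa [e1, e2] at h3
      have hsum2 := sumset_add hw hv
      have e3 : (d - 1) + (t - d) = t - 1 := by
        have : d ≤ t := le_trans (Nat.le_mul_of_pos_left d (by omega)) ht
        omega
      have hdaju : d * a j ≤ u := by
        rw [← hcu]
        calc d * a j ≤ c j * a j := Nat.mul_le_mul_right _ hjd
          _ ≤ ∑ i ∈ Finset.range n, c i * a i :=
              Finset.single_le_sum (f := fun i => c i * a i) (fun i _ => Nat.zero_le _) hjmem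
      have e4 : d * a j + (u - d * a j) = u := Nat.add_sub_cancel' hdaju
      rwa [e3, e4] at hsum2

/-- If `(x,y) ∈ G` with `x ∈ ℤ \ S₁`, `y ∈ ℤ \ S₂` and `x + y = sd` for an integer `s`,
then there is an integer `s' ≥ s + 2` with `AP_{s'} ≠ ∅`; in particular
`m(AP_S) ≥ s + 2`. -/
theorem mAP_ge_of_gap (n d : ℕ) (a : ℕ → ℕ)
    (hn : 4 ≤ n)
    (ha0 : a 0 = 0)
    (had : a (n - 1) = d)
    (hmono : ∀ i j, i < j → j ≤ n - 1 → a i < a j)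
    (hgcd : (Finset.Icc 1 (n - 1)).gcd a = 1)
    (x y s : ℤ)
    (hG : (x, y) ∈ G n d a)
    (hx : x ∉ S1Z n a)
    (hy : y ∉ S2Z n d a)
    (hs : x + y = s * d) :
    (∃ s' : ℕ, s + 2 ≤ (s' : ℤ) ∧ APs n d a s' ≠ ∅)
      ∧ s + 2 ≤ (mAP n d a : ℤ) :=
    by
  classical
  have hd : 0 < d := by
    have h := hmono 0 (n - 1) (by omega) le_rfl
    rw [ha0, had] at h; exact h
  have hle : ∀ i, i < n → a i ≤ d := by
    intro i hi
    rcases Nat.lt_or_ge i (n - 1) with h | h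
    · have h2 := hmono i (n - 1) h le_rfl
      rw [had] at h2; exact h2.le
    · have h2 : i = n - 1 := by omega
      rw [h2, had]
  have hdS1 : d ∈ AddSubmonoid.closure {x : ℕ | ∃ i < n, a i = x} :=
    AddSubmonoid.subset_closure ⟨n - 1, by omega, had⟩
  have hdS2 : d ∈ AddSubmonoid.closure {x : ℕ | ∃ i < n, d - a i = x} :=
    AddSubmonoid.subset_closure ⟨0, by omega, by simp [ha0]⟩
  have hS1add : ∀ (w k : ℕ), w ∈ S1 n a → w + k * d ∈ S1 n a := by
    intro w k hw
    have h1 : (k * d : ℕ) ∈ AddSubmonoid.closure {x : ℕ | ∃ i < n, a i = x} := by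
      have h2 := nsmul_mem hdS1 k
      simpa [smul_eq_mul] using h2
    exact AddSubmonoid.add_mem _ hw h1
  have hS2add : ∀ (w k : ℕ), w ∈ S2 n d a → w + k * d ∈ S2 n d a := by
    intro w k hw
    have h1 : (k * d : ℕ) ∈ AddSubmonoid.closure {x : ℕ | ∃ i < n, d - a i = x} := by
      have h2 := nsmul_mem hdS2 k
      simpa [smul_eq_mul] using h2
    exact AddSubmonoid.add_mem _ hw h1
  -- from membership in G, find an element of S1 congruent to x mod d
  have key : ∀ p : ℤ × ℤ,
      p ∈ AddSubgroup.closure {p : ℤ × ℤ | ∃ i < n, p = ((a i : ℤ), (d : ℤ) - (a i : ℤ))} →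
      ∃ w : ℕ, w ∈ S1 n a ∧ (d : ℤ) ∣ (w : ℤ) - p.1 := by
    intro p hp
    induction hp using AddSubgroup.closure_induction with
    | mem q hq =>
        obtain ⟨i, hi, rfl⟩ := hq
        exact ⟨a i, sumset_mem_S1 (mem_sumset_single hi), by simp⟩
    | zero =>
        refine ⟨0, ?_, by simp⟩
        exact AddSubmonoid.zero_mem (AddSubmonoid.closure {x : ℕ | ∃ i < n, a i = x})
    | add q r hq hr ihq ihr =>
        obtain ⟨w1, hw1, k1, e1⟩ := ihq
        obtain ⟨w2, hw2, k2, e2⟩ := ihr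
        refine ⟨w1 + w2, AddSubmonoid.add_mem _ hw1 hw2, k1 + k2, ?_⟩
        rw [Prod.fst_add]
        push_cast
        linear_combination e1 + e2
    | neg q hq ih =>
        obtain ⟨w, hw, k, e⟩ := ih
        refine ⟨(d - 1) * w, ?_, (w : ℤ) - k, ?_⟩
        · have h2 := nsmul_mem
            (show w ∈ AddSubmonoid.closure {x : ℕ | ∃ i < n, a i = x} from hw) (d - 1)
          exact (by simpa [smul_eq_mul] using h2 :
            (d - 1) * w ∈ AddSubmonoid.closure {x : ℕ | ∃ i < n, a i = x})
        · rw [Prod.fst_neg]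
          push_cast [Nat.cast_sub (show 1 ≤ d from hd)]
          linear_combination -e
  obtain ⟨w, hwS1, hwdvd⟩ := key (x, y) hG
  have hwdvd' : (d : ℤ) ∣ (w : ℤ) - x := hwdvd
  obtain ⟨t₁, hwt⟩ := S1_exists_sumset hwS1
  set T := {t : ℕ | ∃ u : ℕ, u ∈ sumset n a t ∧ (d : ℤ) ∣ (u : ℤ) - x} with hTdef
  have hTne : T.Nonempty := ⟨t₁, w, hwt, hwdvd'⟩
  obtain ⟨u, hut, hud⟩ := Nat.sInf_mem hTne
  set t₀ := sInf T with ht₀def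
  have hmin : ∀ t', t' < t₀ → t' ∉ T := fun t' h => Nat.notMem_of_lt_sInf h
  obtain ⟨γ, hγ⟩ := hud
  have hγ1 : 1 ≤ γ := by
    by_contra hcon
    push_neg at hcon
    apply hx
    refine ⟨u + (-γ).toNat * d, hS1add u _ (sumset_mem_S1 hut), ?_⟩
    push_cast
    rw [Int.toNat_of_nonneg (by omega)]
    push_cast
    linear_combination hγ
  have hule : u ≤ t₀ * d := mem_sumset_le hle hut
  have hvS2 : t₀ * d - u ∈ S2 n d a := sumset_mem_S2 hle hut
  have hts : s + γ + 1 ≤ (t₀ : ℤ) := by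
    by_contra hcon
    push_neg at hcon
    apply hy
    refine ⟨(t₀ * d - u) + (s + γ - t₀).toNat * d, hS2add _ _ hvS2, ?_⟩
    push_cast [Nat.cast_sub hule]
    rw [Int.toNat_of_nonneg (by omega)]
    linear_combination -hs - hγ
  have ht₀s : s + 2 ≤ (t₀ : ℤ) := by omega
  have hpSS : (u, t₀ * d - u) ∈ SS n d a := sumset_mem_SS hle hut
  have hAP : (u, t₀ * d - u) ∈ APs n d a t₀ := by
    refine ⟨⟨hpSS, ?_, ?_⟩, ?_⟩
    · rintro ⟨q, hq, hq2⟩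
      obtain ⟨t', hq1, hqlev⟩ := SS_level hle hq
      have e1 : q.1 = u := by
        have h2 := congrArg Prod.fst hq2; simpa using h2
      have e2 : q.2 + d = t₀ * d - u := by
        have h2 := congrArg Prod.snd hq2; simpa using h2
      have ht' : t' + 1 = t₀ := by
        have h3 : t' * d + d = t₀ * d := by
          set A := t' * d with hA
          set B := t₀ * d with hB
          omega
        exact Nat.eq_of_mul_eq_mul_right hd (by rw [add_mul, one_mul]; exact h3)
      exact hmin t' (by omega) ⟨u, e1 ▸ hq1, γ, hγ⟩
    · rintro ⟨q, hq, hq2⟩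
      obtain ⟨t', hq1, hqlev⟩ := SS_level hle hq
      have e1 : q.1 + d = u := by
        have h2 := congrArg Prod.fst hq2; simpa using h2
      have e2 : q.2 = t₀ * d - u := by
        have h2 := congrArg Prod.snd hq2; simpa using h2
      have ht' : t' + 1 = t₀ := by
        have h3 : t' * d + d = t₀ * d := by
          set A := t' * d with hA
          set B := t₀ * d with hB
          omega
        exact Nat.eq_of_mul_eq_mul_right hd (by rw [add_mul, one_mul]; exact h3)
      refine hmin t' (by omega) ⟨q.1, hq1, γ - 1, ?_⟩
      have e4 : (q.1 : ℤ) = (u : ℤ) - d := by omega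
      rw [e4]
      linear_combination hγ
    · show u + (t₀ * d - u) = t₀ * d
      exact Nat.add_sub_cancel' hule
  have hbdd : ∀ t : ℕ, APs n d a t ≠ ∅ → t ≤ n * d := by
    intro t hne
    by_contra hgt
    push_neg at hgt
    obtain ⟨p, hpmem⟩ := Set.nonempty_iff_ne_empty.2 hne
    obtain ⟨⟨hpS, hp0d, hpd0⟩, hplev⟩ := hpmem
    obtain ⟨t', hp1, hplev'⟩ := SS_level hle hpS
    have hplev2 : p.1 + p.2 = t * d := hplev
    have ht' : t' = t := Nat.eq_of_mul_eq_mul_right hd (by rw [← hplev', ← hplev2])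
    subst ht'
    have htpos : 0 < t' := Nat.lt_of_le_of_lt (Nat.zero_le (n * d)) hgt
    have htd : (t' - 1) * d + d = t' * d := by
      calc (t' - 1) * d + d = (t' - 1 + 1) * d := by rw [add_mul, one_mul]
        _ = t' * d := by rw [Nat.sub_add_cancel htpos]
    rcases descent hn ha0 had hmono (le_of_lt hgt) hp1 with hcase | ⟨hdu, hcase⟩
    · apply hp0d
      have hle' : p.1 ≤ (t' - 1) * d := mem_sumset_le hle hcase
      refine ⟨(p.1, (t' - 1) * d - p.1), sumset_mem_SS hle hcase, ?_⟩
      refine Prod.ext ?_ ?_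
      · show p.1 + 0 = p.1
        omega
      · show (t' - 1) * d - p.1 + d = p.2
        set A := (t' - 1) * d with hA
        set B := t' * d with hB
        omega
    · apply hpd0
      have hle' : p.1 - d ≤ (t' - 1) * d := mem_sumset_le hle hcase
      refine ⟨(p.1 - d, (t' - 1) * d - (p.1 - d)), sumset_mem_SS hle hcase, ?_⟩
      refine Prod.ext ?_ ?_
      · show p.1 - d + d = p.1
        exact Nat.sub_add_cancel hdu
      · show (t' - 1) * d - (p.1 - d) + 0 = p.2
        set A := (t' - 1) * d with hA
        set B := t' * d with hB
        omega
  have hmain : APs n d a t₀ ≠ ∅ := by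
    intro hemp
    rw [Set.eq_empty_iff_forall_notMem] at hemp
    exact hemp _ hAP
  have hbdd' : BddAbove {s' : ℕ | APs n d a s' ≠ ∅} := ⟨n * d, fun t htm => hbdd t htm⟩
  have hle_sup : t₀ ≤ mAP n d a := le_csSup hbdd' hmain
  exact ⟨⟨t₀, ht₀s, hmain⟩, le_trans ht₀s (by exact_mod_cast hle_sup)⟩


end SumsetsCurve
end

section
/- There exist integers x ≥ 1 and y ≥ 1 such that (F(S₁)+d, y) ∈ AP_S and (x, F(S₂)+d) ∈ AP_S; consequently, setting N := ⌈(c₁+c₂)/d⌉, one has m(AP_S) ≥ ⌈N/2⌉ + 1 = ⌈(c₁+c₂)/(2d)⌉ + 1. -/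
open scoped BigOperators

namespace SumsetsCurve

/-! ### auxiliary -/

def Ag (n : ℕ) (g : ℕ → ℕ) (s x : ℕ) : Prop :=
  ∃ f : Fin s → ℕ, (∀ i, f i < n) ∧ x = ∑ i, g (f i)

def Rep (n d : ℕ) (a : ℕ → ℕ) (s : ℕ) (p : ℕ × ℕ) : Prop :=
  ∃ f : Fin s → ℕ, (∀ i, f i < n) ∧ p = ∑ i, (a (f i), d - a (f i))

section Generic
variable {n d : ℕ} {g : ℕ → ℕ}

lemma Ag_zero : Ag n g 0 0 := ⟨Fin.elim0, fun i => i.elim0, by simp⟩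

lemma Ag_single {i : ℕ} (hi : i < n) : Ag n g 1 (g i) :=
  ⟨fun _ => i, fun _ => hi, by simp⟩

lemma Ag_add {s t x y : ℕ} (hx : Ag n g s x) (hy : Ag n g t y) :
    Ag n g (s + t) (x + y) := by
  obtain ⟨f₁, h₁, rfl⟩ := hx
  obtain ⟨f₂, h₂, rfl⟩ := hy
  refine ⟨Fin.append f₁ f₂, ?_, ?_⟩
  · intro i
    refine Fin.addCases (motive := fun i => Fin.append f₁ f₂ i < n) (fun j => ?_) (fun j => ?_) i
    · simpa using h₁ j
    · simpa using h₂ j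
  · rw [Fin.sum_univ_add]
    simp

lemma Ag_mem {s x : ℕ} (h : Ag n g s x) : x ∈ numSG {x | ∃ i < n, g i = x} := by
  obtain ⟨f, hf, rfl⟩ := h
  exact AddSubmonoid.sum_mem _ fun i _ => AddSubmonoid.subset_closure ⟨f i, hf i, rfl⟩

lemma mem_Ag {x : ℕ} (h : x ∈ numSG {x | ∃ i < n, g i = x}) : ∃ s, Ag n g s x := by
  refine AddSubmonoid.closure_induction ?_ ?_ ?_ h
  · rintro y ⟨i, hi, rfl⟩
    exact ⟨1, Ag_single hi⟩
  · exact ⟨0, Ag_zero⟩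
  · rintro y z _ _ ⟨s, hs⟩ ⟨t, ht⟩
    exact ⟨s + t, Ag_add hs ht⟩

lemma Ag_succ (h0 : ∃ i < n, g i = 0) {s x : ℕ} (h : Ag n g s x) : Ag n g (s + 1) x := by
  obtain ⟨i, hi, hgi⟩ := h0
  have := Ag_add h (Ag_single hi)
  rwa [hgi, add_zero] at this

lemma Ag_mono (h0 : ∃ i < n, g i = 0) {s t x : ℕ} (h : Ag n g s x) (hst : s ≤ t) :
    Ag n g t x := by
  induction t, hst using Nat.le_induction with
  | base => exact h
  | succ t _ ih => exact Ag_succ h0 ih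

lemma Ag_le (hle : ∀ i < n, g i ≤ d) {s x : ℕ} (h : Ag n g s x) : x ≤ s * d := by
  obtain ⟨f, hf, rfl⟩ := h
  calc ∑ i, g (f i) ≤ ∑ _i : Fin s, d := Finset.sum_le_sum fun i _ => hle _ (hf i)
    _ = s * d := by simp [Finset.sum_const, mul_comm]

lemma Ag_drop {s x : ℕ} (h : Ag n g s x) : ∃ l ≤ x, Ag n g l x := by
  induction s generalizing x with
  | zero =>
    obtain ⟨f, hf, rfl⟩ := h
    exact ⟨0, by simp, Ag_zero⟩
  | succ s ih =>
    obtain ⟨f, hf, rfl⟩ := h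
    rw [Fin.sum_univ_succ]
    have htail : Ag n g s (∑ i : Fin s, g (f i.succ)) := ⟨fun i => f i.succ, fun i => hf _, rfl⟩
    obtain ⟨l, hl, hAg⟩ := ih htail
    rcases Nat.eq_zero_or_pos (g (f 0)) with h0 | h0
    · rw [h0, zero_add]
      exact ⟨l, hl, hAg⟩
    · have := Ag_add (Ag_single (hf 0)) hAg
      exact ⟨1 + l, by omega, this⟩

lemma Ag_length (hdgen : ∃ i < n, g i = d) {c : ℕ}
    (hc : ∀ m, c ≤ m → m ∈ numSG {x | ∃ i < n, g i = x}) :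
    ∀ k w, w ∈ numSG {x | ∃ i < n, g i = x} → w ≤ c + d + k * d →
      ∃ l ≤ c + d + k, Ag n g l w := by
  intro k
  induction k with
  | zero =>
    intro w hw hwle
    obtain ⟨s, hs⟩ := mem_Ag hw
    obtain ⟨l, hl, h⟩ := Ag_drop hs
    exact ⟨l, by omega, h⟩
  | succ k ih =>
    intro w hw hwle
    by_cases hcase : w ≤ c + d + k * d
    · obtain ⟨l, hl, h⟩ := ih w hw hcase
      exact ⟨l, by omega, h⟩
    · push_neg at hcase
      have hd1 : 0 < d := by
        rcases Nat.eq_zero_or_pos d with rfl | h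
        · omega
        · exact h
      have hwd : c ≤ w - d := by omega
      have h1 : w - d ∈ numSG {x | ∃ i < n, g i = x} := hc _ hwd
      have h2 : w - d ≤ c + d + k * d := by
        have : (k + 1) * d = k * d + d := by ring
        omega
      obtain ⟨l, hl, h⟩ := ih _ h1 h2
      obtain ⟨i, hi, hgi⟩ := hdgen
      have hadd := Ag_add h (Ag_single hi)
      rw [hgi] at hadd
      have hw' : w - d + d = w := by omega
      rw [hw'] at hadd
      exact ⟨l + 1, by omega, hadd⟩

end Generic

section Pairs
variable {n d : ℕ} {a : ℕ → ℕ}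

lemma rep_sum_eq (hle : ∀ i < n, a i ≤ d) {s : ℕ} (f : Fin s → ℕ) (hf : ∀ i, f i < n) :
    (∑ i, a (f i)) + (∑ i, (d - a (f i))) = s * d := by
  rw [← Finset.sum_add_distrib]
  have h : ∀ i : Fin s, a (f i) + (d - a (f i)) = d := fun i => by
    have := hle (f i) (hf i); omega
  rw [Finset.sum_congr rfl fun i _ => h i]
  simp [Finset.sum_const, mul_comm]

lemma Rep_fst_snd (hle : ∀ i < n, a i ≤ d) {s : ℕ} {p : ℕ × ℕ} (h : Rep n d a s p) :
    Ag n a s p.1 ∧ Ag n (fun i => d - a i) s p.2 ∧ p.1 + p.2 = s * d := by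
  obtain ⟨f, hf, rfl⟩ := h
  have h1 : (∑ i, (a (f i), d - a (f i))).1 = ∑ i, a (f i) := by
    simp [Prod.fst_sum]
  have h2 : (∑ i, (a (f i), d - a (f i))).2 = ∑ i, (d - a (f i)) := by
    simp [Prod.snd_sum]
  refine ⟨⟨f, hf, h1⟩, ⟨f, hf, h2⟩, ?_⟩
  rw [h1, h2]
  exact rep_sum_eq hle f hf

lemma Rep_of_fst (hle : ∀ i < n, a i ≤ d) {s x y : ℕ}
    (hx : Ag n a s x) (hxy : x + y = s * d) : Rep n d a s (x, y) := by
  obtain ⟨f, hf, rfl⟩ := hx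
  refine ⟨f, hf, ?_⟩
  have hsum := rep_sum_eq hle f hf
  have h1 : (∑ i, (a (f i), d - a (f i))).1 = ∑ i, a (f i) := by simp [Prod.fst_sum]
  have h2 : (∑ i, (a (f i), d - a (f i))).2 = ∑ i, (d - a (f i)) := by simp [Prod.snd_sum]
  have : y = ∑ i, (d - a (f i)) := by omega
  refine Prod.ext ?_ ?_
  · rw [h1]
  · rw [h2, this]

lemma Rep_of_snd (hle : ∀ i < n, a i ≤ d) {s x y : ℕ}
    (hy : Ag n (fun i => d - a i) s y) (hxy : x + y = s * d) : Rep n d a s (x, y) := by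
  obtain ⟨f, hf, hyeq⟩ := hy
  simp only at hyeq
  refine ⟨f, hf, ?_⟩
  have hsum := rep_sum_eq hle f hf
  have h1 : (∑ i, (a (f i), d - a (f i))).1 = ∑ i, a (f i) := by simp [Prod.fst_sum]
  have h2 : (∑ i, (a (f i), d - a (f i))).2 = ∑ i, (d - a (f i)) := by simp [Prod.snd_sum]
  have hx : x = ∑ i, a (f i) := by omega
  refine Prod.ext ?_ ?_
  · rw [h1, hx]
  · rw [h2, ← hyeq]

end Pairs

section Conductor

lemma conductor_mem {S : Set ℕ} (h : ∃ c, ∀ m, c ≤ m → m ∈ S) :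
    ∀ m, conductor S ≤ m → m ∈ S :=
  Nat.sInf_mem (s := {c | ∀ m, c ≤ m → m ∈ S}) h

lemma conductor_pred_not_mem {S : Set ℕ} (h : ∃ c, ∀ m, c ≤ m → m ∈ S)
    (h1 : 1 ≤ conductor S) : conductor S - 1 ∉ S := by
  intro hmem
  have hub : conductor S - 1 ∈ {c | ∀ m, c ≤ m → m ∈ S} := by
    intro m hm
    rcases eq_or_lt_of_le hm with heq | hlt
    · rwa [← heq]
    · exact conductor_mem h m (by omega)
  have := Nat.sInf_le hub
  have hc : conductor S = sInf {c | ∀ m, c ≤ m → m ∈ S} := rfl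
  omega

lemma nsmul_nat_mem (M : AddSubmonoid ℕ) {x : ℕ} (hx : x ∈ M) (k : ℕ) : k * x ∈ M := by
  simpa [nsmul_eq_mul] using M.nsmul_mem hx k

lemma bezout (M : AddSubmonoid ℕ) (T : Finset ℕ) (hT : ∀ t ∈ T, t ∈ M) :
    ∃ u v : ℕ, u ∈ M ∧ v ∈ M ∧ (u : ℤ) - v = T.gcd id := by
  classical
  induction T using Finset.induction_on with
  | empty => exact ⟨0, 0, zero_mem M, zero_mem M, by simp⟩
  | insert t T htT ih =>
    obtain ⟨u, v, hu, hv, huv⟩ := ih fun x hx => hT x (Finset.mem_insert_of_mem hx)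
    have ht : t ∈ M := hT t (Finset.mem_insert_self _ _)
    set gT := T.gcd id with hgT
    have hgcd : (insert t T).gcd id = Nat.gcd t gT := by
      rw [Finset.gcd_insert]; rfl
    set α := Nat.gcdA t gT with hα'
    set β := Nat.gcdB t gT with hβ'
    have hb : (Nat.gcd t gT : ℤ) = t * α + gT * β := Nat.gcd_eq_gcd_ab t gT
    have hαe : (α.toNat : ℤ) - (-α).toNat = α := by omega
    have hβe : (β.toNat : ℤ) - (-β).toNat = β := by omega
    refine ⟨α.toNat * t + β.toNat * u + (-β).toNat * v,
            (-α).toNat * t + (-β).toNat * u + β.toNat * v, ?_, ?_, ?_⟩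
    · exact add_mem (add_mem (nsmul_nat_mem M ht _) (nsmul_nat_mem M hu _)) (nsmul_nat_mem M hv _)
    · exact add_mem (add_mem (nsmul_nat_mem M ht _) (nsmul_nat_mem M hu _)) (nsmul_nat_mem M hv _)
    · rw [hgcd, hb]
      push_cast
      linear_combination (t : ℤ) * hαe + ((u : ℤ) - (v : ℤ)) * hβe + β * huv

lemma exists_conductor_s15 (M : AddSubmonoid ℕ) (T : Finset ℕ) (hT : ∀ t ∈ T, t ∈ M)
    (hg : T.gcd id = 1) : ∃ c, ∀ m, c ≤ m → m ∈ M := by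
  obtain ⟨u, v, hu, hv, huv⟩ := bezout M T hT
  rw [hg] at huv
  have huv' : u = v + 1 := by omega
  refine ⟨v * v, fun m hm => ?_⟩
  rcases Nat.eq_zero_or_pos v with rfl | hv1
  · have h1 : u = 1 := by omega
    have := nsmul_nat_mem M hu m
    rwa [h1, mul_one] at this
  · set q := m / v with hq'
    set r := m % v with hr'
    have hr : r < v := Nat.mod_lt _ hv1
    have hq : v ≤ q := (Nat.le_div_iff_mul_le hv1).mpr hm
    have hrq : r ≤ q := le_trans (le_of_lt hr) hq
    have hmem : (q - r) * v + r * u ∈ M := add_mem (nsmul_nat_mem M hv _) (nsmul_nat_mem M hu _)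
    have heq : (q - r) * v + r * u = m := by
      rw [huv']
      calc (q - r) * v + r * (v + 1) = ((q - r) + r) * v + r := by ring
        _ = q * v + r := by rw [Nat.sub_add_cancel hrq]
        _ = m := by rw [mul_comm]; exact Nat.div_add_mod m v
    rwa [heq] at hmem

end Conductor


section SSlem
variable {n d : ℕ} {a : ℕ → ℕ}

lemma mem_SS_iff {p : ℕ × ℕ} : p ∈ SS n d a ↔ ∃ s, Rep n d a s p := by
  constructor
  · intro h
    refine AddSubmonoid.closure_induction ?_ ?_ ?_ h
    · rintro q ⟨i, hi, rfl⟩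
      exact ⟨1, fun _ => i, fun _ => hi, by simp⟩
    · exact ⟨0, Fin.elim0, fun i => i.elim0, by simp⟩
    · rintro q r _ _ ⟨s, f₁, h₁, rfl⟩ ⟨t, f₂, h₂, rfl⟩
      refine ⟨s + t, Fin.append f₁ f₂, ?_, ?_⟩
      · intro i
        refine Fin.addCases (motive := fun i => Fin.append f₁ f₂ i < n)
          (fun j => ?_) (fun j => ?_) i
        · simpa using h₁ j
        · simpa using h₂ j
      · rw [Fin.sum_univ_add]
        simp
  · rintro ⟨s, f, hf, rfl⟩
    exact AddSubmonoid.sum_mem _ fun i _ => AddSubmonoid.subset_closure ⟨f i, hf i, rfl⟩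

lemma ap_side {n d : ℕ} (g : ℕ → ℕ)
    (hdgen : ∃ i < n, g i = d)
    (hle : ∀ i < n, g i ≤ d)
    (hd2 : 2 ≤ d)
    (hc : ∀ m, conductor (numSG {x | ∃ i < n, g i = x}) ≤ m →
        m ∈ numSG {x | ∃ i < n, g i = x})
    (hc' : 1 ≤ conductor (numSG {x | ∃ i < n, g i = x}) →
        (conductor (numSG {x | ∃ i < n, g i = x}) - 1) ∉ numSG {x | ∃ i < n, g i = x}) :
    ∃ s, 1 ≤ s ∧ Ag n g s (conductor (numSG {x | ∃ i < n, g i = x}) + d - 1)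
      ∧ (∀ t, Ag n g t (conductor (numSG {x | ∃ i < n, g i = x}) + d - 1) → s ≤ t)
      ∧ conductor (numSG {x | ∃ i < n, g i = x}) + d - 1 < s * d := by
  set c := conductor (numSG {x | ∃ i < n, g i = x}) with hcdef
  set x := c + d - 1 with hxdef
  have hxc : c ≤ x := by omega
  have hxmem : x ∈ numSG {x | ∃ i < n, g i = x} := hc x hxc
  have hne : {s | Ag n g s x}.Nonempty := mem_Ag hxmem
  set s := sInf {s | Ag n g s x} with hsdef
  have hs : Ag n g s x := Nat.sInf_mem hne
  have hmin : ∀ t, Ag n g t x → s ≤ t := fun t ht => Nat.sInf_le ht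
  have hs1 : 1 ≤ s := by
    rcases Nat.eq_zero_or_pos s with h0 | h
    · exfalso
      rw [h0] at hs
      obtain ⟨f, _, hxe⟩ := hs
      simp at hxe
      omega
    · exact h
  refine ⟨s, hs1, hs, hmin, ?_⟩
  -- strictness
  by_contra hge
  push_neg at hge
  -- x = s * d would follow from Ag bound; but here we only know s*d ≤ x.
  obtain ⟨k, hk⟩ : ∃ k, s = k + 1 := ⟨s - 1, by omega⟩
  have hdmem : d ∈ numSG {x | ∃ i < n, g i = x} := by
    obtain ⟨i, hi, hgi⟩ := hdgen
    exact AddSubmonoid.subset_closure ⟨i, hi, hgi⟩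
  have hkd : k * d ∈ numSG {x | ∃ i < n, g i = x} := nsmul_nat_mem _ hdmem k
  -- we need x ≤ s*d to conclude x = s*d; get via a bound? we avoid: use hge directly.
  have hsd : s * d = k * d + d := by rw [hk]; ring
  rcases Nat.eq_zero_or_pos c with hc0 | hc1
  · -- x = d - 1 < d ≤ s*d contradiction
    have : d ≤ s * d := by
      calc d = 1 * d := by ring
        _ ≤ s * d := Nat.mul_le_mul_right d hs1
    omega
  · have hub : x ≤ s * d := Ag_le hle hs
    have hxeq : x = s * d := by omega
    have hc1e : c - 1 = k * d := by omega
    exact hc' hc1 (hc1e ▸ hkd)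

end SSlem

/-- There exist `x, y ≥ 1` with `(F(S₁)+d, y) ∈ AP_S` and `(x, F(S₂)+d) ∈ AP_S`
(coordinates computed in ℤ, `F(Sᵢ) = cᵢ - 1`); consequently, with
`N := ⌈(c₁+c₂)/d⌉`, one has `m(AP_S) ≥ ⌈N/2⌉ + 1 = ⌈(c₁+c₂)/(2d)⌉ + 1`. -/
theorem mAP_lower_bound (n d : ℕ) (a : ℕ → ℕ)
    (hn : 4 ≤ n)
    (ha0 : a 0 = 0)
    (had : a (n - 1) = d)
    (hmono : ∀ i j, i < j → j ≤ n - 1 → a i < a j)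
    (hgcd : (Finset.Icc 1 (n - 1)).gcd a = 1) :
    (∃ x y : ℕ, 1 ≤ x ∧ 1 ≤ y
      ∧ (∃ p ∈ APS n d a,
          (p.1 : ℤ) = (conductor (S1 n a) : ℤ) - 1 + d ∧ p.2 = y)
      ∧ (∃ p ∈ APS n d a,
          p.1 = x ∧ (p.2 : ℤ) = (conductor (S2 n d a) : ℤ) - 1 + d))
    ∧ ⌈((⌈((conductor (S1 n a) : ℚ) + (conductor (S2 n d a) : ℚ)) / (d : ℚ)⌉ : ℚ)) / 2⌉ + 1
        ≤ (mAP n d a : ℤ)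
    ∧ ⌈((⌈((conductor (S1 n a) : ℚ) + (conductor (S2 n d a) : ℚ)) / (d : ℚ)⌉ : ℚ)) / 2⌉ + 1
        = ⌈((conductor (S1 n a) : ℚ) + (conductor (S2 n d a) : ℚ)) / (2 * (d : ℚ))⌉ + 1 := by
  classical
  have h0n : 0 < n := by omega
  have hn1n : n - 1 < n := by omega
  have hd2 : 2 ≤ d := by
    have h1 : a 0 < a 1 := hmono 0 1 (by omega) (by omega)
    have h2 : a 1 < a (n - 1) := hmono 1 (n - 1) (by omega) le_rfl
    omega
  have hd0 : 0 < d := by omega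
  have hlea : ∀ i < n, a i ≤ d := by
    intro i hi
    rcases eq_or_lt_of_le (show i ≤ n - 1 by omega) with heq | hlt
    · rw [heq, had]
    · rw [← had]; exact le_of_lt (hmono i (n - 1) hlt le_rfl)
  have hleb : ∀ i < n, d - a i ≤ d := fun i _ => Nat.sub_le _ _
  have h0a : ∃ i < n, a i = 0 := ⟨0, h0n, ha0⟩
  have hda : ∃ i < n, a i = d := ⟨n - 1, hn1n, had⟩
  have h0b : ∃ i < n, d - a i = 0 := ⟨n - 1, hn1n, by rw [had]; omega⟩
  have hdb : ∃ i < n, d - a i = d := ⟨0, h0n, by rw [ha0]; omega⟩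
  -- cofiniteness of S1
  have hcof1 : ∃ c, ∀ m, c ≤ m → m ∈ S1 n a := by
    have hT : ∀ t ∈ (Finset.Icc 1 (n - 1)).image a,
        t ∈ AddSubmonoid.closure {x : ℕ | ∃ i < n, a i = x} := by
      intro t ht
      obtain ⟨i, hi, rfl⟩ := Finset.mem_image.1 ht
      have hin : i < n := by have := Finset.mem_Icc.1 hi; omega
      exact AddSubmonoid.subset_closure ⟨i, hin, rfl⟩
    have hg : ((Finset.Icc 1 (n - 1)).image a).gcd id = 1 := by
      rw [← Finset.gcd_eq_gcd_image]; exact hgcd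
    obtain ⟨c, hc⟩ := exists_conductor_s15 _ _ hT hg
    exact ⟨c, fun m hm => hc m hm⟩
  -- cofiniteness of S2
  have hcof2 : ∃ c, ∀ m, c ≤ m → m ∈ S2 n d a := by
    set T2 := insert d ((Finset.Icc 1 (n - 1)).image (fun i => d - a i)) with hT2def
    have hT : ∀ t ∈ T2, t ∈ AddSubmonoid.closure {x : ℕ | ∃ i < n, d - a i = x} := by
      intro t ht
      rcases Finset.mem_insert.1 ht with rfl | ht'
      · exact AddSubmonoid.subset_closure ⟨0, h0n, by rw [ha0]; omega⟩
      · obtain ⟨i, hi, rfl⟩ := Finset.mem_image.1 ht'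
        have hin : i < n := by have := Finset.mem_Icc.1 hi; omega
        exact AddSubmonoid.subset_closure ⟨i, hin, rfl⟩
    have hg : T2.gcd id = 1 := by
      have hdvd : T2.gcd id ∣ 1 := by
        rw [← hgcd]
        apply Finset.dvd_gcd
        intro i hi
        have hin : i < n := by have := Finset.mem_Icc.1 hi; omega
        have h1 : T2.gcd id ∣ d := Finset.gcd_dvd (Finset.mem_insert_self _ _)
        have h2 : T2.gcd id ∣ d - a i :=
          Finset.gcd_dvd (Finset.mem_insert_of_mem (Finset.mem_image_of_mem _ hi))
        have h3 : a i = d - (d - a i) := by have := hlea i hin; omega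
        rw [h3]
        exact Nat.dvd_sub h1 h2
      exact Nat.dvd_one.1 hdvd
    obtain ⟨c, hc⟩ := exists_conductor_s15 _ _ hT hg
    exact ⟨c, fun m hm => hc m hm⟩
  set c1 := conductor (S1 n a) with hc1def
  set c2 := conductor (S2 n d a) with hc2def
  have hc1 : ∀ m, c1 ≤ m → m ∈ S1 n a := conductor_mem hcof1
  have hc2 : ∀ m, c2 ≤ m → m ∈ S2 n d a := conductor_mem hcof2
  have hc1' : 1 ≤ c1 → (c1 - 1) ∉ S1 n a := conductor_pred_not_mem hcof1
  have hc2' : 1 ≤ c2 → (c2 - 1) ∉ S2 n d a := conductor_pred_not_mem hcof2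
  obtain ⟨s₁, hs₁1, hA1, hmin1, hlt1⟩ :
      ∃ s, 1 ≤ s ∧ Ag n a s (c1 + d - 1) ∧ (∀ t, Ag n a t (c1 + d - 1) → s ≤ t)
        ∧ c1 + d - 1 < s * d :=
    ap_side a hda hlea hd2 hc1 hc1'
  obtain ⟨s₂, hs₂1, hA2, hmin2, hlt2⟩ :
      ∃ s, 1 ≤ s ∧ Ag n (fun i => d - a i) s (c2 + d - 1)
        ∧ (∀ t, Ag n (fun i => d - a i) t (c2 + d - 1) → s ≤ t)
        ∧ c2 + d - 1 < s * d :=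
    ap_side (fun i => d - a i) hdb hleb hd2 hc2 hc2'
  set x1 := c1 + d - 1 with hx1def
  set y2 := c2 + d - 1 with hy2def
  set y1 := s₁ * d - x1 with hy1def
  set x2 := s₂ * d - y2 with hx2def
  have hx1y1 : x1 + y1 = s₁ * d := Nat.add_sub_cancel' (le_of_lt hlt1)
  have hx2y2 : x2 + y2 = s₂ * d := Nat.sub_add_cancel (le_of_lt hlt2)
  have hy1pos : 1 ≤ y1 := Nat.sub_pos_of_lt hlt1
  have hx2pos : 1 ≤ x2 := Nat.sub_pos_of_lt hlt2
  have hp1SS : (x1, y1) ∈ SS n d a := mem_SS_iff.2 ⟨s₁, Rep_of_fst hlea hA1 hx1y1⟩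
  have hp2SS : (x2, y2) ∈ SS n d a := mem_SS_iff.2 ⟨s₂, Rep_of_snd hlea hA2 hx2y2⟩
  have hp1AP : (x1, y1) ∈ APS n d a := by
    refine ⟨hp1SS, ?_, ?_⟩
    · rintro ⟨q, hq, hqe⟩
      obtain ⟨t, ht⟩ := mem_SS_iff.1 hq
      obtain ⟨hqA, hqB, hsum⟩ := Rep_fst_snd hlea ht
      have h1 : q.1 + 0 = x1 ∧ q.2 + d = y1 := Prod.ext_iff.1 hqe
      have hq1 : q.1 = x1 := by omega
      have htd : t * d < s₁ * d := by
        have : t * d + d = s₁ * d := by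
          have h2 := h1.2
          linarith [hsum, hq1, hx1y1]
        linarith
      have := hmin1 t (hq1 ▸ hqA)
      have hts : t < s₁ := lt_of_mul_lt_mul_right htd (Nat.zero_le d)
      omega
    · rintro ⟨q, hq, hqe⟩
      obtain ⟨t, ht⟩ := mem_SS_iff.1 hq
      obtain ⟨hqA, hqB, hsum⟩ := Rep_fst_snd hlea ht
      have h1 : q.1 + d = x1 ∧ q.2 + 0 = y1 := Prod.ext_iff.1 hqe
      have hc1pos : 1 ≤ c1 := by omega
      have hq1 : q.1 = c1 - 1 := by omega
      exact hc1' hc1pos (hq1 ▸ Ag_mem hqA)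
  have hp2AP : (x2, y2) ∈ APS n d a := by
    refine ⟨hp2SS, ?_, ?_⟩
    · rintro ⟨q, hq, hqe⟩
      obtain ⟨t, ht⟩ := mem_SS_iff.1 hq
      obtain ⟨hqA, hqB, hsum⟩ := Rep_fst_snd hlea ht
      have h1 : q.1 + 0 = x2 ∧ q.2 + d = y2 := Prod.ext_iff.1 hqe
      have hc2pos : 1 ≤ c2 := by omega
      have hq2 : q.2 = c2 - 1 := by omega
      exact hc2' hc2pos (hq2 ▸ Ag_mem hqB)
    · rintro ⟨q, hq, hqe⟩
      obtain ⟨t, ht⟩ := mem_SS_iff.1 hq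
      obtain ⟨hqA, hqB, hsum⟩ := Rep_fst_snd hlea ht
      have h1 : q.1 + d = x2 ∧ q.2 + 0 = y2 := Prod.ext_iff.1 hqe
      have hq2 : q.2 = y2 := by omega
      have htd : t * d < s₂ * d := by
        have : t * d + d = s₂ * d := by linarith [hsum, h1.1, hq2, hx2y2]
        linarith
      have := hmin2 t (hq2 ▸ hqB)
      have hts : t < s₂ := lt_of_mul_lt_mul_right htd (Nat.zero_le d)
      omega
  -- emptiness of high levels
  have hempty : ∀ s, 2 * (c1 + c2 + 2 * d + 4) ≤ s → APs n d a s = ∅ := by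
    intro s hs
    rw [Set.eq_empty_iff_forall_notMem]
    rintro ⟨x, y⟩ ⟨⟨hSSm, hnd1, hnd2⟩, hlev⟩
    have hlev' : x + y = s * d := hlev
    obtain ⟨t, ht⟩ := mem_SS_iff.1 hSSm
    obtain ⟨hxA, hyB, hsum⟩ := Rep_fst_snd hlea ht
    have hsum' : x + y = t * d := hsum
    have hts : t = s := Nat.eq_of_mul_eq_mul_right hd0 (by linarith)
    subst hts
    have hs2 : 2 ≤ t := by omega
    have h2d : 2 * d ≤ t * d := Nat.mul_le_mul_right d hs2
    have h5 : (t - 1) * d + d = t * d := by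
      obtain ⟨k', rfl⟩ : ∃ k', t = k' + 1 := ⟨t - 1, by omega⟩
      simp [Nat.add_mul]
    set k := t / 2 + 1 with hkdef
    have hskk : t ≤ 2 * k := by omega
    have hsdk : t * d ≤ 2 * (k * d) := by
      calc t * d ≤ (2 * k) * d := Nat.mul_le_mul_right d hskk
        _ = 2 * (k * d) := by ring
    rcases le_or_gt y x with hyx | hxy
    · -- contradict hnd2 with (x - d, y)
      have hyk : y ≤ c2 + d + k * d := by linarith
      have hyS2 : y ∈ S2 n d a := Ag_mem hyB
      obtain ⟨l, hl, hAg⟩ :=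
        Ag_length (g := fun i => d - a i) hdb (c := c2) hc2 k y hyS2 hyk
      have hl' : l ≤ t - 1 := by omega
      have hAg' : Ag n (fun i => d - a i) (t - 1) y := Ag_mono h0b hAg hl'
      have hxd : d ≤ x := by linarith
      have h6 : x - d + y + d = (t - 1) * d + d := by
        rw [h5]
        have h7 : x - d + d = x := Nat.sub_add_cancel hxd
        calc x - d + y + d = (x - d + d) + y := by ring
          _ = x + y := by rw [h7]
          _ = t * d := hlev'
      have hrepeq : x - d + y = (t - 1) * d := Nat.add_right_cancel h6
      refine hnd2 ⟨(x - d, y), mem_SS_iff.2 ⟨t - 1, Rep_of_snd hlea hAg' hrepeq⟩, ?_⟩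
      have h7 : x - d + d = x := Nat.sub_add_cancel hxd
      simp [Prod.ext_iff, h7]
    · -- contradict hnd1 with (x, y - d)
      have hxk : x ≤ c1 + d + k * d := by linarith
      have hxS1 : x ∈ S1 n a := Ag_mem hxA
      obtain ⟨l, hl, hAg⟩ := Ag_length (g := a) hda (c := c1) hc1 k x hxS1 hxk
      have hl' : l ≤ t - 1 := by omega
      have hAg' : Ag n a (t - 1) x := Ag_mono h0a hAg hl'
      have hyd : d ≤ y := by linarith
      have h6 : x + (y - d) + d = (t - 1) * d + d := by
        rw [h5]
        have h7 : y - d + d = y := Nat.sub_add_cancel hyd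
        calc x + (y - d) + d = x + ((y - d) + d) := by ring
          _ = x + y := by rw [h7]
          _ = t * d := hlev'
      have hrepeq : x + (y - d) = (t - 1) * d := Nat.add_right_cancel h6
      refine hnd1 ⟨(x, y - d), mem_SS_iff.2 ⟨t - 1, Rep_of_fst hlea hAg' hrepeq⟩, ?_⟩
      have h7 : y - d + d = y := Nat.sub_add_cancel hyd
      simp [Prod.ext_iff, h7]
  have hbdd : BddAbove {s | APs n d a s ≠ ∅} := by
    refine ⟨2 * (c1 + c2 + 2 * d + 4), fun s hs => ?_⟩
    by_contra hcon
    push_neg at hcon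
    exact hs (hempty s (by omega))
  have hm1 : s₁ ≤ mAP n d a :=
    le_csSup hbdd (Set.nonempty_iff_ne_empty.1 ⟨(x1, y1), hp1AP, hx1y1⟩)
  have hm2 : s₂ ≤ mAP n d a :=
    le_csSup hbdd (Set.nonempty_iff_ne_empty.1 ⟨(x2, y2), hp2AP, hx2y2⟩)
  have hx11 : x1 + 1 = c1 + d := by omega
  have hy21 : y2 + 1 = c2 + d := by omega
  have hc1s : c1 + d ≤ s₁ * d := by rw [← hx11]; exact Nat.succ_le_of_lt hlt1
  have hc2s : c2 + d ≤ s₂ * d := by rw [← hy21]; exact Nat.succ_le_of_lt hlt2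
  have hdQ : (0 : ℚ) < (d : ℚ) := by exact_mod_cast hd0
  refine ⟨⟨x2, y1, hx2pos, hy1pos, ⟨(x1, y1), hp1AP, ?_, rfl⟩,
      ⟨(x2, y2), hp2AP, rfl, ?_⟩⟩, ?_, ?_⟩
  · show ((x1 : ℤ)) = (c1 : ℤ) - 1 + d
    omega
  · show ((y2 : ℤ)) = (c2 : ℤ) - 1 + d
    omega
  · -- the lower bound for mAP
    set m := mAP n d a with hmdef
    set N : ℤ := ⌈((c1 : ℚ) + (c2 : ℚ)) / (d : ℚ)⌉ with hN
    have hcs1 : ((c1 : ℚ) + d) ≤ (s₁ : ℚ) * d := by exact_mod_cast hc1s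
    have hcs2 : ((c2 : ℚ) + d) ≤ (s₂ : ℚ) * d := by exact_mod_cast hc2s
    have hNle : N ≤ (s₁ : ℤ) + s₂ - 2 := by
      rw [hN]
      apply Int.ceil_le.2
      rw [div_le_iff₀ hdQ]
      push_cast
      nlinarith [hcs1, hcs2, hdQ]
    have hceil2 : ⌈(N : ℚ) / 2⌉ ≤ (m : ℤ) - 1 := by
      apply Int.ceil_le.2
      rw [div_le_iff₀ (by norm_num : (0 : ℚ) < 2)]
      have hNm : N ≤ ((m : ℤ) - 1) * 2 := by omega
      exact_mod_cast hNm
    omega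
  · -- the ceiling identity
    set N : ℤ := ⌈((c1 : ℚ) + (c2 : ℚ)) / (d : ℚ)⌉ with hN
    set M : ℤ := ⌈((c1 : ℚ) + (c2 : ℚ)) / (2 * (d : ℚ))⌉ with hM
    have key1 : ((c1 : ℚ) + c2) / (2 * (d : ℚ)) = (((c1 : ℚ) + c2) / (d : ℚ)) / 2 := by
      rw [div_div]; ring_nf
    have h3 := Int.le_ceil (((c1 : ℚ) + c2) / (2 * (d : ℚ)))
    have h3' : (((c1 : ℚ) + c2) / (d : ℚ)) / 2 ≤ (M : ℚ) := by
      rw [hM, ← key1]; exact h3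
    have h1 : ⌈(N : ℚ) / 2⌉ ≤ M := by
      apply Int.ceil_le.2
      rw [div_le_iff₀ (by norm_num : (0 : ℚ) < 2)]
      have h2 : N ≤ M * 2 := by
        rw [hN]
        apply Int.ceil_le.2
        push_cast
        linarith
      exact_mod_cast h2
    have h2 : M ≤ ⌈(N : ℚ) / 2⌉ := by
      rw [hM]
      apply Int.ceil_le.2
      have h4 := Int.le_ceil (((c1 : ℚ) + c2) / (d : ℚ))
      rw [key1]
      calc (((c1 : ℚ) + c2) / (d : ℚ)) / 2 ≤ (N : ℚ) / 2 := by
            rw [hN]; linarith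
        _ ≤ (⌈(N : ℚ) / 2⌉ : ℚ) := Int.le_ceil _
    omega


end SumsetsCurve
end

section
/- One has ⌈(c₁+c₂)/d⌉ ≤ d − n + 1. -/
open scoped BigOperators

namespace SumsetsCurve

/-- sums of lists with entries in `B` -/
def RepL (B : Finset ℕ) (s : ℕ) : Prop :=
  ∃ l : List ℕ, (∀ x ∈ l, x ∈ B) ∧ l.sum = s

lemma RepL.zero (B : Finset ℕ) : RepL B 0 := ⟨[], by simp, rfl⟩

lemma RepL.add {B : Finset ℕ} {s t : ℕ} (hs : RepL B s) (ht : RepL B t) :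
    RepL B (s + t) := by
  obtain ⟨l, hl, rfl⟩ := hs
  obtain ⟨l', hl', rfl⟩ := ht
  refine ⟨l ++ l', ?_, by simp⟩
  intro x hx
  rcases List.mem_append.1 hx with h | h
  exacts [hl x h, hl' x h]

lemma RepL.nsmul {B : Finset ℕ} {s : ℕ} (hs : RepL B s) (c : ℕ) : RepL B (c * s) := by
  induction c with
  | zero => simpa using RepL.zero B
  | succ k ih => have := ih.add hs; simpa [Nat.succ_mul] using this

lemma RepL.single {B : Finset ℕ} {b : ℕ} (hb : b ∈ B) : RepL B b :=
  ⟨[b], by simp [hb], by simp⟩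

lemma RepL.mono {B B' : Finset ℕ} (hBB : B ⊆ B') {s : ℕ} (hs : RepL B s) : RepL B' s := by
  obtain ⟨l, hl, rfl⟩ := hs
  exact ⟨l, fun x hx => hBB (hl x hx), rfl⟩

/-- minimal B-sum in the class `u` mod `d` -/
noncomputable def wcl (d : ℕ) (B : Finset ℕ) (u : ZMod d) : ℕ :=
  sInf {s : ℕ | RepL B s ∧ (s : ZMod d) = u}

/-- number of gaps in the class: `⌊w/d⌋` -/
noncomputable def gam (d : ℕ) (B : Finset ℕ) (u : ZMod d) : ℕ := wcl d B u / d

def Reach (d : ℕ) (B : Finset ℕ) : Prop :=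
  ∀ u : ZMod d, ∃ s : ℕ, RepL B s ∧ (s : ZMod d) = u

lemma wcl_spec {d : ℕ} {B : Finset ℕ} (h : Reach d B) (u : ZMod d) :
    RepL B (wcl d B u) ∧ ((wcl d B u : ℕ) : ZMod d) = u :=
  Nat.sInf_mem (h u)

lemma wcl_le {d : ℕ} {B : Finset ℕ} {u : ZMod d} {s : ℕ}
    (hs : RepL B s) (hu : (s : ZMod d) = u) : wcl d B u ≤ s :=
  Nat.sInf_le ⟨hs, hu⟩

lemma wcl_zero (d : ℕ) (B : Finset ℕ) : wcl d B 0 = 0 :=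
  Nat.le_zero.1 (wcl_le (RepL.zero B) (by simp))

lemma gam_zero (d : ℕ) (B : Finset ℕ) : gam d B 0 = 0 := by
  simp [gam, wcl_zero]

lemma intCast_emod_zmod {d : ℕ} (p : ℤ) : (((p % (d : ℤ)) : ℤ) : ZMod d) = (p : ZMod d) := by
  conv_rhs => rw [← Int.mul_ediv_add_emod p (d : ℤ)]
  push_cast
  simp [ZMod.natCast_self]

/-- Bezout: some B-sum is congruent to the gcd mod d -/
lemma exists_rep_gcd (d : ℕ) (hd : 0 < d) (s : Finset ℕ) :
    ∃ r : ℕ, RepL s r ∧ ((r : ZMod d) = ((s.gcd id : ℕ) : ZMod d)) := by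
  classical
  induction s using Finset.induction_on with
  | empty => exact ⟨0, RepL.zero _, by simp⟩
  | @insert a s ha ih =>
    obtain ⟨rg, hrg, hcast⟩ := ih
    have hrg' : RepL (insert a s) rg := hrg.mono (Finset.subset_insert _ _)
    set g := s.gcd id with hg
    have hbez : ((Nat.gcd a g : ℤ)) = a * Nat.gcdA a g + g * Nat.gcdB a g :=
      Nat.gcd_eq_gcd_ab a g
    have hdz : (d : ℤ) ≠ 0 := by exact_mod_cast hd.ne'
    set p : ℤ := Nat.gcdA a g
    set q : ℤ := Nat.gcdB a g
    set x : ℕ := (p % (d : ℤ)).toNat with hxdef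
    set y : ℕ := (q % (d : ℤ)).toNat with hydef
    have hxcast : ((x : ℕ) : ZMod d) = (p : ZMod d) := by
      have h0 : (0:ℤ) ≤ p % (d:ℤ) := Int.emod_nonneg p hdz
      have : ((x : ℕ) : ℤ) = p % (d : ℤ) := Int.toNat_of_nonneg h0
      calc ((x : ℕ) : ZMod d) = (((x : ℕ) : ℤ) : ZMod d) := by push_cast; ring
        _ = ((p % (d:ℤ) : ℤ) : ZMod d) := by rw [this]
        _ = (p : ZMod d) := intCast_emod_zmod p
    have hycast : ((y : ℕ) : ZMod d) = (q : ZMod d) := by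
      have h0 : (0:ℤ) ≤ q % (d:ℤ) := Int.emod_nonneg q hdz
      have : ((y : ℕ) : ℤ) = q % (d : ℤ) := Int.toNat_of_nonneg h0
      calc ((y : ℕ) : ZMod d) = (((y : ℕ) : ℤ) : ZMod d) := by push_cast; ring
        _ = ((q % (d:ℤ) : ℤ) : ZMod d) := by rw [this]
        _ = (q : ZMod d) := intCast_emod_zmod q
    refine ⟨x * a + y * rg, (RepL.nsmul (RepL.single (Finset.mem_insert_self a s)) x).add
      (hrg'.nsmul y), ?_⟩
    have hgcd : (insert a s).gcd id = Nat.gcd a g := by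
      rw [Finset.gcd_insert]; rfl
    rw [hgcd]
    have key : ((x * a + y * rg : ℕ) : ZMod d) = ((Nat.gcd a g : ℕ) : ZMod d) := by
      rw [Nat.cast_add, Nat.cast_mul, Nat.cast_mul, hxcast, hycast, hcast]
      have h2 : ((Nat.gcd a g : ℕ) : ZMod d) = (((Nat.gcd a g : ℤ)) : ZMod d) := by
        push_cast; ring
      rw [h2, hbez]
      push_cast
      ring
    exact key

lemma filter_sum_cast (d : ℕ) (l : List ℕ) :
    (((l.filter (fun x => x ≠ d)).sum : ℕ) : ZMod d) = ((l.sum : ℕ) : ZMod d) := by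
  induction l with
  | nil => simp
  | cons a t ih =>
    by_cases hc : a = d
    · subst hc
      rw [List.filter_cons_of_neg (by simp)]
      rw [ih, List.sum_cons, Nat.cast_add, ZMod.natCast_self, zero_add]
    · rw [List.filter_cons_of_pos (by simpa using hc)]
      rw [List.sum_cons, List.sum_cons, Nat.cast_add, Nat.cast_add, ih]

lemma reach_of_gcd {d : ℕ} (hd : 0 < d) {B : Finset ℕ}
    (hB : ∀ b ∈ B, b < d)
    (hgcd : (insert d B).gcd id = 1) : Reach d B := by
  classical
  haveI : NeZero d := ⟨hd.ne'⟩
  obtain ⟨r, hr, hrc⟩ := exists_rep_gcd d hd (insert d B)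
  rw [hgcd] at hrc
  obtain ⟨l, hl, rfl⟩ := hr
  set l' := l.filter (fun x => x ≠ d) with hl'def
  have hl'B : ∀ x ∈ l', x ∈ B := by
    intro x hx
    have hxl : x ∈ l := List.mem_of_mem_filter hx
    have hxne : x ≠ d := by simpa using List.of_mem_filter hx
    rcases Finset.mem_insert.1 (hl x hxl) with h | h
    · exact absurd h hxne
    · exact h
  have hsum : ((l'.sum : ℕ) : ZMod d) = 1 := by
    rw [hl'def, filter_sum_cast d l, hrc]; norm_num
  intro u
  have hrep : RepL B (u.val * l'.sum) := RepL.nsmul (B := B) ⟨l', hl'B, rfl⟩ u.val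
  refine ⟨u.val * l'.sum, hrep, ?_⟩
  rw [Nat.cast_mul, hsum, mul_one]
  exact ZMod.natCast_rightInverse u

section Chunk2

variable {d : ℕ} {B : Finset ℕ}

lemma exists_min_list (hre : Reach d B) (z : ZMod d) :
    ∃ l : List ℕ, (∀ x ∈ l, x ∈ B) ∧ l.sum = wcl d B z ∧
      (∀ q : List ℕ, (∀ x ∈ q, x ∈ B) → q.sum = wcl d B z → l.length ≤ q.length) := by
  classical
  have hne : {k : ℕ | ∃ l : List ℕ, (∀ x ∈ l, x ∈ B) ∧ l.sum = wcl d B z ∧ l.length = k}.Nonempty := by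
    obtain ⟨⟨l, hl, hsum⟩, -⟩ := wcl_spec hre z
    exact ⟨l.length, l, hl, hsum, rfl⟩
  obtain ⟨l, hl, hsum, hlen⟩ := Nat.sInf_mem hne
  refine ⟨l, hl, hsum, ?_⟩
  intro q hq hqs
  rw [hlen]
  exact Nat.sInf_le ⟨q, hq, hqs, rfl⟩

/-- P1 : prefix sums of a minimal-sum representation are minimal in their class. -/
lemma prefix_wcl (hre : Reach d B) {z : ZMod d} {l : List ℕ}
    (hl : ∀ x ∈ l, x ∈ B) (hsum : l.sum = wcl d B z) (k : ℕ) :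
    wcl d B (((l.take k).sum : ℕ) : ZMod d) = (l.take k).sum := by
  set t := (l.take k).sum with ht
  have hle : wcl d B ((t : ℕ) : ZMod d) ≤ t :=
    wcl_le ⟨l.take k, fun x hx => hl x (List.mem_of_mem_take hx), rfl⟩ rfl
  rcases lt_or_eq_of_le hle with hlt | he
  · exfalso
    obtain ⟨hrep, hcast⟩ := wcl_spec hre ((t : ℕ) : ZMod d)
    obtain ⟨q, hq, hqs⟩ := hrep
    have hsplit : t + (l.drop k).sum = l.sum := by
      rw [ht, ← List.sum_take_add_sum_drop l k]
    have hclass : (((q ++ l.drop k).sum : ℕ) : ZMod d) = z := by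
      have h1 : ((l.sum : ℕ) : ZMod d) = z := by
        rw [hsum]; exact (wcl_spec hre z).2
      rw [List.sum_append, hqs, Nat.cast_add, hcast, ← h1, ← hsplit, Nat.cast_add]
    have hlt2 : (q ++ l.drop k).sum < wcl d B z := by
      rw [List.sum_append, hqs, ← hsum, ← hsplit]
      exact Nat.add_lt_add_right hlt _
    have := wcl_le (B := B) (u := z) ⟨q ++ l.drop k, ?_, rfl⟩ hclass
    · omega
    · intro x hx
      rcases List.mem_append.1 hx with h | h
      exacts [hq x h, hl x (List.mem_of_mem_drop h)]
  · exact he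

/-- P2 : prefixes have minimal length among representations of the same sum. -/
lemma prefix_minlen {z : ZMod d} {l : List ℕ}
    (hl : ∀ x ∈ l, x ∈ B) (hsum : l.sum = wcl d B z)
    (hmin : ∀ q : List ℕ, (∀ x ∈ q, x ∈ B) → q.sum = wcl d B z → l.length ≤ q.length)
    {k : ℕ} (hk : k ≤ l.length)
    (q : List ℕ) (hq : ∀ x ∈ q, x ∈ B) (hqs : q.sum = (l.take k).sum) :
    k ≤ q.length := by
  by_contra hcon
  push_neg at hcon
  have hsplit : (l.take k).sum + (l.drop k).sum = l.sum :=
    List.sum_take_add_sum_drop l k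
  have hsum2 : (q ++ l.drop k).sum = wcl d B z := by
    rw [List.sum_append, hqs, hsplit, hsum]
  have hmem2 : ∀ x ∈ q ++ l.drop k, x ∈ B := by
    intro x hx
    rcases List.mem_append.1 hx with h | h
    exacts [hq x h, hl x (List.mem_of_mem_drop h)]
  have hlen2 := hmin (q ++ l.drop k) hmem2 hsum2
  rw [List.length_append, List.length_drop] at hlen2
  omega

/-- P3 : strict monotonicity of prefix sums (entries positive). -/
lemma prefix_strictmono {l : List ℕ} (hpos : ∀ x ∈ l, 0 < x)
    {i j : ℕ} (hij : i < j) (hj : j ≤ l.length) :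
    (l.take i).sum < (l.take j).sum := by
  have hj' : j = i + (j - i) := by omega
  rw [hj', List.take_add, List.sum_append]
  have hne : ((l.drop i).take (j - i)) ≠ [] := by
    have hlen : ((l.drop i).take (j - i)).length = min (j - i) (l.length - i) := by
      simp [List.length_take, List.length_drop]
    intro hcon
    rw [hcon] at hlen
    simp at hlen
    omega
  obtain ⟨x, hx⟩ := List.exists_mem_of_ne_nil _ hne
  have hxpos : 0 < x := hpos x (List.mem_of_mem_drop (List.mem_of_mem_take hx))
  have hxle : x ≤ ((l.drop i).take (j - i)).sum :=
    List.single_le_sum (fun y _ => Nat.zero_le y) x hx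
  omega

end Chunk2
section Chunk3

variable {d : ℕ} {B : Finset ℕ}

/-- P4a : a prefix whose class is 0 must be the empty prefix. -/
lemma prefix_class_zero (hre : Reach d B) {z : ZMod d} {l : List ℕ}
    (hl : ∀ x ∈ l, x ∈ B) (hpos : ∀ x ∈ l, 0 < x)
    (hsum : l.sum = wcl d B z) {k : ℕ} (hk : k ≤ l.length)
    (hc : (((l.take k).sum : ℕ) : ZMod d) = 0) : k = 0 := by
  have h1 := prefix_wcl hre hl hsum k
  rw [hc, wcl_zero] at h1
  by_contra hcon
  have := prefix_strictmono hpos (Nat.pos_of_ne_zero hcon) hk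
  simp at this
  omega

/-- P4b : a prefix whose class is that of a generator has length ≤ 1. -/
lemma prefix_class_gen (hd : 0 < d) (hre : Reach d B)
    (hB : ∀ b ∈ B, 0 < b ∧ b < d) {z : ZMod d} {l : List ℕ}
    (hl : ∀ x ∈ l, x ∈ B) (hsum : l.sum = wcl d B z)
    (hmin : ∀ q : List ℕ, (∀ x ∈ q, x ∈ B) → q.sum = wcl d B z → l.length ≤ q.length)
    {k : ℕ} (hk : k ≤ l.length) {b : ℕ} (hb : b ∈ B)
    (hc : (((l.take k).sum : ℕ) : ZMod d) = ((b : ℕ) : ZMod d)) : k ≤ 1 := by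
  haveI : NeZero d := ⟨hd.ne'⟩
  have h1 := prefix_wcl hre hl hsum k
  rw [hc] at h1
  have h2 : wcl d B ((b : ℕ) : ZMod d) ≤ b := wcl_le (RepL.single hb) rfl
  -- so (take k).sum = wcl ≤ b < d, and its class equals b's class, with both < d
  have hbd : b < d := (hB b hb).2
  have htlt : (l.take k).sum < d := by omega
  have heq : (l.take k).sum = b := by
    have hval := congrArg ZMod.val hc
    rwa [ZMod.val_natCast_of_lt htlt, ZMod.val_natCast_of_lt hbd] at hval
  exact prefix_minlen hl hsum hmin hk [b] (by simp [hb]) (by simp [heq])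

/-- monotone: prefix sums are at most the total. -/
lemma take_sum_le (l : List ℕ) (k : ℕ) : (l.take k).sum ≤ l.sum := by
  conv_rhs => rw [← List.sum_take_add_sum_drop l k]
  omega

/-- Discrete IVT for ℕ-valued sequences increasing by at most 1. -/
lemma nat_ivt (f : ℕ → ℕ) (h0 : f 0 = 0) (hstep : ∀ k, f (k + 1) ≤ f k + 1) :
    ∀ L g, g ≤ f L → ∃ k, k ≤ L ∧ f k = g := by
  intro L
  induction L with
  | zero => intro g hg; exact ⟨0, le_refl 0, by omega⟩
  | succ n ih =>
    intro g hg
    by_cases hc : g ≤ f n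
    · obtain ⟨k, hk, hfk⟩ := ih g hc
      exact ⟨k, by omega, hfk⟩
    · have := hstep n
      have : g = f (n + 1) := by omega
      exact ⟨n + 1, le_refl _, this.symm⟩

/-- every value `g ≤ gam z` is attained by some class. -/
lemma gam_surj_onto (hd : 0 < d) (hre : Reach d B)
    (hB : ∀ b ∈ B, 0 < b ∧ b < d) (z : ZMod d) {g : ℕ} (hg : g ≤ gam d B z) :
    ∃ c : ZMod d, gam d B c = g := by
  obtain ⟨⟨l, hl, hsum⟩, hcast⟩ := wcl_spec hre z
  have hstep : ∀ k, (l.take (k+1)).sum / d ≤ (l.take k).sum / d + 1 := by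
    intro k
    by_cases hk : k < l.length
    · have : (l.take (k+1)).sum ≤ (l.take k).sum + d := by
        have h1 : l.take (k+1) = l.take k ++ (l.drop k).take 1 := by
          rw [← List.take_add]
        rw [h1, List.sum_append]
        have h2 : ((l.drop k).take 1).sum ≤ d := by
          rcases hdrop : l.drop k with _ | ⟨a, t⟩
          · simp
          · have ha : a ∈ l := by
              have : a ∈ l.drop k := by rw [hdrop]; exact List.mem_cons_self
              exact List.mem_of_mem_drop this
            have := (hB a (hl a ha)).2
            simp
            omega
        omega
      calc (l.take (k+1)).sum / d ≤ ((l.take k).sum + d) / d := Nat.div_le_div_right this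
        _ = (l.take k).sum / d + 1 := by rw [Nat.add_div_right _ hd]
    · have : l.take (k+1) = l.take k := by
        rw [List.take_of_length_le (by omega), List.take_of_length_le (by omega)]
      rw [this]
      omega
  have hivt := nat_ivt (fun k => (l.take k).sum / d) (by simp) hstep l.length g
    (by
      show g ≤ (l.take l.length).sum / d
      rw [List.take_length]
      have : l.sum / d = gam d B z := by rw [hsum]; rfl
      omega)
  obtain ⟨k, hk, hfk⟩ := hivt
  refine ⟨(((l.take k).sum : ℕ) : ZMod d), ?_⟩
  have := prefix_wcl hre hl (by rw [hsum]) k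
  rw [gam, this]
  exact hfk

end Chunk3
section Chunk4

variable {d : ℕ} {B : Finset ℕ}

lemma map_sub_sum {l : List ℕ} {d : ℕ} (h : ∀ x ∈ l, x ≤ d) :
    (l.map (fun b => d - b)).sum + l.sum = l.length * d := by
  induction l with
  | nil => simp
  | cons a t ih =>
    have ha := h a List.mem_cons_self
    have iht := ih (fun x hx => h x (List.mem_cons_of_mem a hx))
    simp only [List.map_cons, List.sum_cons, List.length_cons]
    have : (d - a) + a = d := by omega
    rw [Nat.succ_mul]
    omega

/-- The dual bound: `gam' (-z) + gam z + 1 ≤ length` of a minimal representation. -/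
lemma dual_gam_bound (hd : 0 < d) (hB : ∀ b ∈ B, 0 < b ∧ b < d)
    {z : ZMod d} (hz : z ≠ 0) (hre : Reach d B)
    {l : List ℕ} (hl : ∀ x ∈ l, x ∈ B) (hsum : l.sum = wcl d B z) :
    gam d (B.image (fun b => d - b)) (-z) + gam d B z + 1 ≤ l.length := by
  haveI : NeZero d := ⟨hd.ne'⟩
  set W := wcl d B z with hW
  set gz := gam d B z with hgz
  set L := l.length with hL
  have hcastW : ((W : ℕ) : ZMod d) = z := (wcl_spec hre z).2
  set r := W % d with hr
  have hWr : W = d * gz + r := by rw [hgz, hr, hW]; exact (Nat.div_add_mod _ _).symm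
  have hrd : r < d := Nat.mod_lt _ hd
  have hr1 : 1 ≤ r := by
    rcases Nat.eq_zero_or_pos r with h0 | h
    · exfalso
      apply hz
      rw [← hcastW, hWr, h0]
      push_cast
      simp [ZMod.natCast_self]
    · exact h
  -- L ≥ 1 and gz < L
  have hsumle : W ≤ L * (d - 1) := by
    rw [← hsum, hL]
    have := List.sum_le_card_nsmul l (d-1) (fun x hx => by have := (hB x (hl x hx)).2; omega)
    simpa [smul_eq_mul] using this
  have hL1 : 1 ≤ L := by
    by_contra hcon
    push_neg at hcon
    interval_cases L
    simp only [Nat.zero_mul, Nat.le_zero] at hsumle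
    omega
  have hgzL : gz + 1 ≤ L := by
    have h1 : L * (d - 1) + L = L * d := by
      have hd1 : (d - 1) + 1 = d := by omega
      calc L * (d - 1) + L = L * ((d - 1) + 1) := by ring
        _ = L * d := by rw [hd1]
    have h2 : d * gz < L * d := by omega
    have h3 : d * gz < d * L := by linarith [Nat.mul_comm L d]
    have := Nat.lt_of_mul_lt_mul_left h3
    omega
  -- the dual list
  set l' := l.map (fun b => d - b) with hl'
  have hmem' : ∀ x ∈ l', x ∈ B.image (fun b => d - b) := by
    intro x hx
    rw [hl'] at hx
    obtain ⟨b, hb, rfl⟩ := List.mem_map.1 hx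
    exact Finset.mem_image_of_mem _ (hl b hb)
  have hsum' : l'.sum + W = L * d := by
    rw [hl', hL, ← hsum]
    exact map_sub_sum (fun x hx => by have := (hB x (hl x hx)).2; omega)
  have hcast' : ((l'.sum : ℕ) : ZMod d) = -z := by
    have h1 : ((l'.sum : ℕ) : ZMod d) + ((W : ℕ) : ZMod d) = 0 := by
      rw [← Nat.cast_add, hsum']
      push_cast
      simp [ZMod.natCast_self]
    rw [hcastW] at h1
    linear_combination h1
  have hwle : wcl d (B.image (fun b => d - b)) (-z) ≤ l'.sum :=
    wcl_le ⟨l', hmem', rfl⟩ hcast'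
  -- compute l'.sum / d
  obtain ⟨k, hk⟩ : ∃ k, L = gz + 1 + k := ⟨L - gz - 1, by omega⟩
  have hexp : l'.sum = d - r + k * d := by
    have h1 : L * d = gz * d + d + k * d := by
      rw [hk]
      ring
    have h2 : gz * d = d * gz := Nat.mul_comm _ _
    omega
  have hdiv : l'.sum / d = k := by
    rw [hexp, Nat.add_mul_div_right _ _ hd, Nat.div_eq_of_lt (by omega)]
    omega
  have : gam d (B.image (fun b => d - b)) (-z) ≤ k := by
    rw [gam]
    calc wcl d (B.image (fun b => d - b)) (-z) / d ≤ l'.sum / d := Nat.div_le_div_right hwle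
      _ = k := hdiv
  omega

end Chunk4
section Chunk5

variable {d : ℕ} {B : Finset ℕ}

lemma gam_cast_gen (hd : 0 < d) {b : ℕ} (hb : b ∈ B) (hbd : b < d) :
    gam d B ((b : ℕ) : ZMod d) = 0 := by
  have h1 : wcl d B ((b : ℕ) : ZMod d) ≤ b := wcl_le (RepL.single hb) rfl
  rw [gam]
  exact Nat.div_eq_of_lt (by omega)

lemma gam_prefix_le (hre : Reach d B) {z : ZMod d} {l : List ℕ}
    (hl : ∀ x ∈ l, x ∈ B) (hsum : l.sum = wcl d B z) (k : ℕ) :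
    gam d B (((l.take k).sum : ℕ) : ZMod d) ≤ gam d B z := by
  rw [gam, prefix_wcl hre hl hsum k, gam, ← hsum]
  exact Nat.div_le_div_right (take_sum_le l k)

lemma T0_card (hd : 0 < d) (hB : ∀ b ∈ B, 0 < b ∧ b < d) :
    (insert (0 : ZMod d) (B.image (Nat.cast : ℕ → ZMod d))).card = B.card + 1 := by
  haveI : NeZero d := ⟨hd.ne'⟩
  rw [Finset.card_insert_of_notMem, Finset.card_image_of_injOn]
  · intro x hx y hy hxy
    have hx' := (hB x hx)
    have hy' := (hB y hy)
    have := congrArg ZMod.val hxy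
    rwa [ZMod.val_natCast_of_lt hx'.2, ZMod.val_natCast_of_lt hy'.2] at this
  · intro hcon
    obtain ⟨b, hb, hb0⟩ := Finset.mem_image.1 hcon
    have := congrArg ZMod.val hb0
    rw [ZMod.val_natCast_of_lt (hB b hb).2, ZMod.val_zero] at this
    exact absurd this (hB b hb).1.ne'

lemma T1_card (hd : 0 < d) (hre : Reach d B) {z : ZMod d} {l : List ℕ}
    (hpos : ∀ x ∈ l, 0 < x)
    (hl : ∀ x ∈ l, x ∈ B) (hsum : l.sum = wcl d B z) :
    ((Finset.Icc 2 l.length).image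
      (fun k => (((l.take k).sum : ℕ) : ZMod d))).card = (Finset.Icc 2 l.length).card := by
  rw [Finset.card_image_of_injOn]
  intro i hi j hj hij
  simp only [Finset.mem_coe, Finset.mem_Icc] at hi hj
  by_contra hne
  rcases Nat.lt_or_ge i j with h | h
  · have h1 := prefix_strictmono hpos h hj.2
    have h2 := congrArg (wcl d B) hij
    rw [prefix_wcl hre hl hsum i, prefix_wcl hre hl hsum j] at h2
    omega
  · have hlt : j < i := by omega
    have h1 := prefix_strictmono hpos hlt hi.2
    have h2 := congrArg (wcl d B) hij
    rw [prefix_wcl hre hl hsum i, prefix_wcl hre hl hsum j] at h2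
    omega

/-- Main counting inequality, with a top class `u`. -/
lemma count_bound (hd : 0 < d) (hB : ∀ b ∈ B, 0 < b ∧ b < d) (hre : Reach d B)
    {z u : ZMod d} {l : List ℕ}
    (hl : ∀ x ∈ l, x ∈ B) (hsum : l.sum = wcl d B z)
    (hmin : ∀ q : List ℕ, (∀ x ∈ q, x ∈ B) → q.sum = wcl d B z → l.length ≤ q.length)
    (hKz : gam d B z < gam d B u) :
    B.card + 1 + (Finset.Icc 2 l.length).card
      + (Finset.Icc (gam d B z + 1) (gam d B u - 1)).card + 1 ≤ d := by
  classical
  haveI : NeZero d := ⟨hd.ne'⟩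
  have hpos : ∀ x ∈ l, 0 < x := fun x hx => (hB x (hl x hx)).1
  set T0 : Finset (ZMod d) := insert 0 (B.image (Nat.cast : ℕ → ZMod d)) with hT0
  set T1 : Finset (ZMod d) :=
    (Finset.Icc 2 l.length).image (fun k => (((l.take k).sum : ℕ) : ZMod d)) with hT1
  set vg : ℕ → ZMod d := fun g =>
    if h : ∃ c : ZMod d, gam d B c = g then h.choose else 0 with hvg
  have hvg_spec : ∀ g, g ≤ gam d B u → gam d B (vg g) = g := by
    intro g hg
    have hex : ∃ c : ZMod d, gam d B c = g := gam_surj_onto hd hre hB u hg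
    rw [hvg]
    simp only [dif_pos hex]
    exact hex.choose_spec
  set T2 : Finset (ZMod d) := (Finset.Icc (gam d B z + 1) (gam d B u - 1)).image vg with hT2
  set T3 : Finset (ZMod d) := {u} with hT3
  -- gam values
  have hgamT0 : ∀ c ∈ T0, gam d B c = 0 := by
    intro c hc
    rcases Finset.mem_insert.1 hc with rfl | hc
    · exact gam_zero d B
    · obtain ⟨b, hb, rfl⟩ := Finset.mem_image.1 hc
      exact gam_cast_gen hd hb (hB b hb).2
  have hgamT1 : ∀ c ∈ T1, gam d B c ≤ gam d B z := by
    intro c hc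
    obtain ⟨k, hk, rfl⟩ := Finset.mem_image.1 hc
    exact gam_prefix_le hre hl hsum k
  have hgamT2 : ∀ c ∈ T2, gam d B z + 1 ≤ gam d B c ∧ gam d B c ≤ gam d B u - 1 := by
    intro c hc
    obtain ⟨g, hg, rfl⟩ := Finset.mem_image.1 hc
    rw [Finset.mem_Icc] at hg
    rw [hvg_spec g (by omega)]
    exact hg
  -- disjointness
  have h01 : Disjoint T0 T1 := by
    rw [Finset.disjoint_right]
    intro c hc hc0
    obtain ⟨k, hk, rfl⟩ := Finset.mem_image.1 hc
    rw [Finset.mem_Icc] at hk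
    rcases Finset.mem_insert.1 hc0 with h | h
    · have := prefix_class_zero hre hl hpos hsum hk.2 h
      omega
    · obtain ⟨b, hb, hbeq⟩ := Finset.mem_image.1 h
      have := prefix_class_gen hd hre hB hl hsum hmin hk.2 hb hbeq.symm
      omega
  have h012 : Disjoint (T0 ∪ T1) T2 := by
    rw [Finset.disjoint_right]
    intro c hc hc0
    have h2 := hgamT2 c hc
    rcases Finset.mem_union.1 hc0 with h | h
    · have := hgamT0 c h; omega
    · have := hgamT1 c h; omega
  have h0123 : Disjoint (T0 ∪ T1 ∪ T2) T3 := by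
    rw [Finset.disjoint_right]
    intro c hc hc0
    rw [hT3, Finset.mem_singleton] at hc
    subst hc
    rcases Finset.mem_union.1 hc0 with h | h
    · rcases Finset.mem_union.1 h with h' | h'
      · have := hgamT0 _ h'; omega
      · have := hgamT1 _ h'; omega
    · have := hgamT2 _ h; omega
  -- cardinalities
  have hc0 : T0.card = B.card + 1 := T0_card hd hB
  have hc1 : T1.card = (Finset.Icc 2 l.length).card := T1_card hd hre hpos hl hsum
  have hc2 : T2.card = (Finset.Icc (gam d B z + 1) (gam d B u - 1)).card := by
    rw [hT2, Finset.card_image_of_injOn]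
    intro i hi j hj hij
    simp only [Finset.mem_coe, Finset.mem_Icc] at hi hj
    have h1 := hvg_spec i (by omega)
    have h2 := hvg_spec j (by omega)
    rw [hij] at h1
    omega
  have htot : (T0 ∪ T1 ∪ T2 ∪ T3).card ≤ d := by
    calc (T0 ∪ T1 ∪ T2 ∪ T3).card ≤ Finset.univ.card := Finset.card_le_univ _
      _ = d := by rw [Finset.card_univ, ZMod.card]
  rw [Finset.card_union_of_disjoint h0123, Finset.card_union_of_disjoint h012,
    Finset.card_union_of_disjoint h01, hc0, hc1, hc2] at htot
  simpa [hT3] using htot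

/-- counting inequality without a top class. -/
lemma count_bound2 (hd : 0 < d) (hB : ∀ b ∈ B, 0 < b ∧ b < d) (hre : Reach d B)
    {z : ZMod d} {l : List ℕ}
    (hl : ∀ x ∈ l, x ∈ B) (hsum : l.sum = wcl d B z)
    (hmin : ∀ q : List ℕ, (∀ x ∈ q, x ∈ B) → q.sum = wcl d B z → l.length ≤ q.length) :
    B.card + 1 + (Finset.Icc 2 l.length).card ≤ d := by
  classical
  haveI : NeZero d := ⟨hd.ne'⟩
  have hpos : ∀ x ∈ l, 0 < x := fun x hx => (hB x (hl x hx)).1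
  set T0 : Finset (ZMod d) := insert 0 (B.image (Nat.cast : ℕ → ZMod d)) with hT0
  set T1 : Finset (ZMod d) :=
    (Finset.Icc 2 l.length).image (fun k => (((l.take k).sum : ℕ) : ZMod d)) with hT1
  have h01 : Disjoint T0 T1 := by
    rw [Finset.disjoint_right]
    intro c hc hc0
    obtain ⟨k, hk, rfl⟩ := Finset.mem_image.1 hc
    rw [Finset.mem_Icc] at hk
    rcases Finset.mem_insert.1 hc0 with h | h
    · have := prefix_class_zero hre hl hpos hsum hk.2 h
      omega
    · obtain ⟨b, hb, hbeq⟩ := Finset.mem_image.1 h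
      have := prefix_class_gen hd hre hB hl hsum hmin hk.2 hb hbeq.symm
      omega
  have hc0 : T0.card = B.card + 1 := T0_card hd hB
  have hc1 : T1.card = (Finset.Icc 2 l.length).card := T1_card hd hre hpos hl hsum
  have htot : (T0 ∪ T1).card ≤ d := by
    calc (T0 ∪ T1).card ≤ Finset.univ.card := Finset.card_le_univ _
      _ = d := by rw [Finset.card_univ, ZMod.card]
  rw [Finset.card_union_of_disjoint h01, hc0, hc1] at htot
  exact htot

end Chunk5
section Chunk6

/-- The core combinatorial theorem : sum of the two "depths" is at most `d - |B| - 1`. -/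
lemma core_bound {d : ℕ} [NeZero d] {B : Finset ℕ}
    (hB : ∀ b ∈ B, 0 < b ∧ b < d)
    (hre : Reach d B) (hre' : Reach d (B.image (fun b => d - b))) :
    Finset.univ.sup (gam d B) + Finset.univ.sup (gam d (B.image (fun b => d - b)))
      + B.card + 1 ≤ d := by
  classical
  have hd : 0 < d := Nat.pos_of_ne_zero (NeZero.ne d)
  set B' := B.image (fun b => d - b) with hB'def
  set K := Finset.univ.sup (gam d B) with hK
  set K' := Finset.univ.sup (gam d B') with hK'
  obtain ⟨u, -, hu⟩ := Finset.exists_mem_eq_sup (Finset.univ : Finset (ZMod d))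
    Finset.univ_nonempty (gam d B)
  obtain ⟨v, -, hv⟩ := Finset.exists_mem_eq_sup (Finset.univ : Finset (ZMod d))
    Finset.univ_nonempty (gam d B')
  by_cases hKz : K' = 0
  · by_cases hK0 : K = 0
    · -- both zero : just |B| + 1 ≤ d
      obtain ⟨l, hl, hsum, hmin⟩ := exists_min_list hre 0
      have := count_bound2 hd hB hre hl hsum hmin
      omega
    · -- K ≥ 1, K' = 0
      obtain ⟨l, hl, hsum, hmin⟩ := exists_min_list hre 0
      have hKu : gam d B (0 : ZMod d) < gam d B u := by
        rw [gam_zero, ← hu, ← hK]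
        omega
      have hcb := count_bound hd hB hre hl hsum hmin hKu
      rw [gam_zero] at hcb
      simp only [Nat.card_Icc] at hcb
      rw [← hu, ← hK] at hcb
      omega
  · -- K' ≥ 1
    have hv0 : v ≠ 0 := by
      intro hcon
      rw [hcon, gam_zero] at hv
      omega
    have hzne : (-v : ZMod d) ≠ 0 := by
      rw [neg_ne_zero]
      exact hv0
    obtain ⟨l, hl, hsum, hmin⟩ := exists_min_list hre (-v)
    have hdual := dual_gam_bound hd hB hzne hre hl hsum
    rw [← hB'def, neg_neg, ← hv, ← hK'] at hdual
    by_cases hcase : gam d B (-v) < gam d B u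
    · have hcb := count_bound hd hB hre hl hsum hmin hcase
      simp only [Nat.card_Icc] at hcb
      rw [← hu, ← hK] at hcb hcase
      omega
    · have hcb := count_bound2 hd hB hre hl hsum hmin
      simp only [Nat.card_Icc] at hcb
      push_neg at hcase
      rw [← hu, ← hK] at hcase
      omega

end Chunk6
section Chunk7

/-- conductor of the numerical semigroup generated by `G ⊇ B ∪ {d}` is at most `d * K`. -/
lemma conductor_le_mul {d : ℕ} [NeZero d] {B : Finset ℕ} (hre : Reach d B) {G : Set ℕ}
    (hBG : ∀ b ∈ B, (b : ℕ) ∈ G) (hdG : (d : ℕ) ∈ G) :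
    conductor (numSG G) ≤ d * Finset.univ.sup (gam d B) := by
  classical
  have hd : 0 < d := Nat.pos_of_ne_zero (NeZero.ne d)
  set K := Finset.univ.sup (gam d B) with hK
  apply Nat.sInf_le
  intro mm hmm
  set u : ZMod d := ((mm : ℕ) : ZMod d) with hu
  obtain ⟨hrep, hcast⟩ := wcl_spec hre u
  set W := wcl d B u with hW
  set q := mm / d with hq
  set r := mm % d with hr
  have e2 : d * q + r = mm := Nat.div_add_mod mm d
  have hWmod : W % d = r := by
    have : ((W : ℕ) : ZMod d) = ((mm : ℕ) : ZMod d) := hcast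
    have hmodeq : W ≡ mm [MOD d] := (ZMod.natCast_eq_natCast_iff _ _ _).1 this
    rw [hr]
    exact hmodeq
  set g := gam d B u with hg
  have e1 : d * g + r = W := by
    rw [hg, gam, ← hWmod, ← hW]
    exact Nat.div_add_mod W d
  have hgK : g ≤ K := by
    rw [hK, hg]
    exact Finset.le_sup (Finset.mem_univ u)
  have hKq : K ≤ q := by
    rw [hq]
    rw [Nat.le_div_iff_mul_le hd]
    calc K * d = d * K := Nat.mul_comm _ _
      _ ≤ mm := hmm
  have e4 : d * (q - g) + d * g = d * q := by
    rw [← Nat.mul_add]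
    congr 1
    omega
  have hmmeq : mm = W + d * (q - g) := by linarith
  have hWG : W ∈ AddSubmonoid.closure G := by
    obtain ⟨l, hl, hsum⟩ := hrep
    rw [← hsum]
    have hmem : ∀ x ∈ l, x ∈ AddSubmonoid.closure G :=
      fun x hx => AddSubmonoid.subset_closure (hBG x (hl x hx))
    exact AddSubmonoid.list_sum_mem (AddSubmonoid.closure G) hmem
  have hdmul : d * (q - g) ∈ AddSubmonoid.closure G := by
    rw [Nat.mul_comm, ← smul_eq_mul]
    exact AddSubmonoid.nsmul_mem _ (AddSubmonoid.subset_closure hdG) _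
  show mm ∈ (AddSubmonoid.closure G : AddSubmonoid ℕ)
  rw [hmmeq]
  exact AddSubmonoid.add_mem _ hWG hdmul

end Chunk7

/-- `⌈(c₁+c₂)/d⌉ ≤ d - n + 1`. -/
theorem ceil_conductors_le (n d : ℕ) (a : ℕ → ℕ)
    (hn : 4 ≤ n)
    (ha0 : a 0 = 0)
    (had : a (n - 1) = d)
    (hmono : ∀ i j, i < j → j ≤ n - 1 → a i < a j)
    (hgcd : (Finset.Icc 1 (n - 1)).gcd a = 1) :
    ⌈((conductor (S1 n a) : ℚ) + (conductor (S2 n d a) : ℚ)) / (d : ℚ)⌉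
      ≤ (d : ℤ) - n + 1 := by
  classical
  -- basic positivity
  have h0d : a 0 < a (n-1) := hmono 0 (n-1) (by omega) (le_refl _)
  rw [ha0, had] at h0d
  have hd : 0 < d := h0d
  haveI : NeZero d := ⟨hd.ne'⟩
  set B₁ : Finset ℕ := (Finset.Icc 1 (n-2)).image a with hB1def
  have hB1mem : ∀ b ∈ B₁, 0 < b ∧ b < d := by
    intro b hb
    obtain ⟨i, hi, rfl⟩ := Finset.mem_image.1 hb
    rw [Finset.mem_Icc] at hi
    constructor
    · have h1 := hmono 0 i (by omega) (by omega)
      omega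
    · have h2 := hmono i (n-1) (by omega) (le_refl _)
      omega
  have hB1card : B₁.card = n - 2 := by
    rw [hB1def, Finset.card_image_of_injOn, Nat.card_Icc]
    · omega
    · intro i hi j hj hij
      simp only [Finset.mem_coe, Finset.mem_Icc] at hi hj
      rcases lt_trichotomy i j with h | h | h
      · have := hmono i j h (by omega); omega
      · exact h
      · have := hmono j i h (by omega); omega
  have hgcd1 : (insert d B₁).gcd id = 1 := by
    have h1 : B₁.gcd id = (Finset.Icc 1 (n-2)).gcd a := by
      rw [hB1def, Finset.gcd_image]
      rfl
    have h2 : Finset.Icc 1 (n-1) = insert (n-1) (Finset.Icc 1 (n-2)) := by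
      ext x
      simp only [Finset.mem_Icc, Finset.mem_insert]
      omega
    calc (insert d B₁).gcd id = GCDMonoid.gcd d ((Finset.Icc 1 (n-2)).gcd a) := by
          rw [Finset.gcd_insert, h1]
          rfl
      _ = (Finset.Icc 1 (n-1)).gcd a := by rw [h2, Finset.gcd_insert, had]
      _ = 1 := hgcd
  have hre1 : Reach d B₁ := reach_of_gcd hd (fun b hb => (hB1mem b hb).2) hgcd1
  have hB2mem : ∀ b ∈ B₁.image (fun b => d - b), 0 < b ∧ b < d := by
    intro b hb
    obtain ⟨c, hc, rfl⟩ := Finset.mem_image.1 hb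
    have := hB1mem c hc
    omega
  have hgcd2 : (insert d (B₁.image (fun b => d - b))).gcd id = 1 := by
    have hdvd : (insert d (B₁.image (fun b => d - b))).gcd id ∣ 1 := by
      rw [← hgcd]
      apply Finset.dvd_gcd
      intro i hi
      rw [Finset.mem_Icc] at hi
      have h1 : (insert d (B₁.image (fun b => d - b))).gcd id ∣ d :=
        Finset.gcd_dvd (Finset.mem_insert_self _ _)
      by_cases hc : i = n-1
      · rw [hc, had]
        exact h1
      · have him : d - a i ∈ B₁.image (fun b => d - b) := by
          apply Finset.mem_image_of_mem
          rw [hB1def]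
          apply Finset.mem_image_of_mem
          rw [Finset.mem_Icc]
          omega
        have h2 : (insert d (B₁.image (fun b => d - b))).gcd id ∣ d - a i :=
          Finset.gcd_dvd (Finset.mem_insert_of_mem him)
        have h3 : a i < d := by
          have := hmono i (n-1) (by omega) (le_refl _)
          omega
        have h4 : d - (d - a i) = a i := by omega
        have := Nat.dvd_sub h1 h2
        rwa [h4] at this
    exact Nat.dvd_one.mp hdvd
  have hre2 : Reach d (B₁.image (fun b => d - b)) :=
    reach_of_gcd hd (fun b hb => (hB2mem b hb).2) hgcd2
  have hcore : Finset.univ.sup (gam d B₁) + Finset.univ.sup (gam d (B₁.image (fun b => d - b)))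
      + B₁.card + 1 ≤ d := core_bound hB1mem hre1 hre2
  set K1 := Finset.univ.sup (gam d B₁) with hK1
  set K2 := Finset.univ.sup (gam d (B₁.image (fun b => d - b))) with hK2
  have hc1 : conductor (S1 n a) ≤ d * K1 := by
    have hgen : ∀ b ∈ B₁, b ∈ {x : ℕ | ∃ i < n, a i = x} := by
      intro b hb
      obtain ⟨i, hi, rfl⟩ := Finset.mem_image.1 hb
      rw [Finset.mem_Icc] at hi
      exact ⟨i, by omega, rfl⟩
    have hdgen : d ∈ {x : ℕ | ∃ i < n, a i = x} := ⟨n-1, by omega, had⟩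
    exact conductor_le_mul hre1 hgen hdgen
  have hc2 : conductor (S2 n d a) ≤ d * K2 := by
    have hgen : ∀ b ∈ B₁.image (fun b => d - b), b ∈ {x : ℕ | ∃ i < n, d - a i = x} := by
      intro b hb
      obtain ⟨c, hc, rfl⟩ := Finset.mem_image.1 hb
      rw [hB1def] at hc
      obtain ⟨i, hi, rfl⟩ := Finset.mem_image.1 hc
      rw [Finset.mem_Icc] at hi
      exact ⟨i, by omega, rfl⟩
    have hdgen : d ∈ {x : ℕ | ∃ i < n, d - a i = x} := ⟨0, by omega, by simp [ha0]⟩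
    exact conductor_le_mul hre2 hgen hdgen
  -- final arithmetic
  have hnle : K1 + K2 + n ≤ d + 1 := by omega
  rw [Int.ceil_le]
  push_cast
  rw [div_le_iff₀ (by positivity : (0:ℚ) < (d:ℚ))]
  have hc12 : ((conductor (S1 n a) : ℚ) + (conductor (S2 n d a) : ℚ))
      ≤ (d : ℚ) * ((K1 : ℚ) + (K2 : ℚ)) := by
    have h := Nat.add_le_add hc1 hc2
    have h2 : conductor (S1 n a) + conductor (S2 n d a) ≤ d * (K1 + K2) := by
      rw [Nat.mul_add]; omega
    exact_mod_cast h2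
  have hKle : (K1 : ℚ) + (K2 : ℚ) ≤ (d : ℚ) - (n : ℚ) + 1 := by
    have : ((K1 + K2 + n : ℕ) : ℚ) ≤ ((d + 1 : ℕ) : ℚ) := by exact_mod_cast hnle
    push_cast at this
    linarith
  have hd0 : (0:ℚ) ≤ (d:ℚ) := by positivity
  nlinarith [hc12, hKle, hd0]

end SumsetsCurve
end
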